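/- arXiv:1604.07976 — 3 statements merged into one kernel-verified Lean document; each statement's English description precedes it below -/
import Mathlib

section
/- (Balas' union of polytopes) Let P₁, …, P_k be non-empty polytopes in R^d and let P = conv(P₁ ∪ ⋯ ∪ P_k). Then xc(P) ≤ Σ_{i=1}^{k} max{1, xc(P_i)}. -/
/-- `P ⊆ ℝ^ι` admits an extended formulation with `m` inequalities: a linear system
`A x + B y ≤ b`, `C x + D y = c` (with `k` extra variables `y` and `p` equalities)
whose projection to the `x`-variables is exactly `P`. -/
def IsExtFormulation {ι : Type} [Fintype ι] (P : Set (ι → ℝ)) (m : ℕ) : Prop :=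
  ∃ (k p : ℕ) (A : Matrix (Fin m) ι ℝ) (B : Matrix (Fin m) (Fin k) ℝ) (b : Fin m → ℝ)
    (C : Matrix (Fin p) ι ℝ) (D : Matrix (Fin p) (Fin k) ℝ) (c : Fin p → ℝ),
    P = {x : ι → ℝ | ∃ y : Fin k → ℝ,
      (∀ i, A.mulVec x i + B.mulVec y i ≤ b i) ∧
      (∀ j, C.mulVec x j + D.mulVec y j = c j)}

/-- The extension complexity of `P`: the minimum number of inequalities
in an extended formulation of `P`. -/
noncomputable def xc {ι : Type} [Fintype ι] (P : Set (ι → ℝ)) : ℕ :=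
  sInf {m | IsExtFormulation P m}

/-- Transfer an extended formulation with arbitrary finite index types to `IsExtFormulation`. -/
lemma isExtFormulation_of_flex {ι : Type} [Fintype ι] (P : Set (ι → ℝ))
    (M K Q : Type) [Fintype M] [Fintype K] [Fintype Q]
    (F : M → ι → ℝ) (G : M → K → ℝ) (bb : M → ℝ)
    (F' : Q → ι → ℝ) (G' : Q → K → ℝ) (cc : Q → ℝ)
    (hP : P = {x : ι → ℝ | ∃ y : K → ℝ,
      (∀ i, ∑ s, F i s * x s + ∑ j, G i j * y j ≤ bb i) ∧
      (∀ q, ∑ s, F' q s * x s + ∑ j, G' q j * y j = cc q)}) :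
    IsExtFormulation P (Fintype.card M) := by
  classical
  obtain ⟨eM⟩ := Fintype.truncEquivFin M
  obtain ⟨eK⟩ := Fintype.truncEquivFin K
  obtain ⟨eQ⟩ := Fintype.truncEquivFin Q
  refine ⟨Fintype.card K, Fintype.card Q,
    fun r s => F (eM.symm r) s, fun r j => G (eM.symm r) (eK.symm j), fun r => bb (eM.symm r),
    fun q s => F' (eQ.symm q) s, fun q j => G' (eQ.symm q) (eK.symm j), fun q => cc (eQ.symm q),
    ?_⟩
  rw [hP]
  ext x
  simp only [Set.mem_setOf_eq, Matrix.mulVec, dotProduct]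
  constructor
  · rintro ⟨y, h1, h2⟩
    refine ⟨fun j => y (eK.symm j), fun r => ?_, fun q => ?_⟩
    · have := h1 (eM.symm r)
      calc ∑ s, F (eM.symm r) s * x s + ∑ j, G (eM.symm r) (eK.symm j) * y (eK.symm j)
          = ∑ s, F (eM.symm r) s * x s + ∑ j, G (eM.symm r) j * y j := by
            rw [Equiv.sum_comp eK.symm (fun j => G (eM.symm r) j * y j)]
        _ ≤ bb (eM.symm r) := this
    · have := h2 (eQ.symm q)
      calc ∑ s, F' (eQ.symm q) s * x s + ∑ j, G' (eQ.symm q) (eK.symm j) * y (eK.symm j)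
          = ∑ s, F' (eQ.symm q) s * x s + ∑ j, G' (eQ.symm q) j * y j := by
            rw [Equiv.sum_comp eK.symm (fun j => G' (eQ.symm q) j * y j)]
        _ = cc (eQ.symm q) := this
  · rintro ⟨y, h1, h2⟩
    refine ⟨fun v => y (eK v), fun i => ?_, fun q => ?_⟩
    · have := h1 (eM i)
      simp only [Equiv.symm_apply_apply] at this
      calc ∑ s, F i s * x s + ∑ j, G i j * y (eK j)
          = ∑ s, F i s * x s + ∑ j, G i (eK.symm j) * y (eK (eK.symm j)) := by
            rw [Equiv.sum_comp eK.symm (fun v => G i v * y (eK v))]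
        _ ≤ bb i := by simpa using this
    · have := h2 (eQ q)
      simp only [Equiv.symm_apply_apply] at this
      calc ∑ s, F' q s * x s + ∑ j, G' q j * y (eK j)
          = ∑ s, F' q s * x s + ∑ j, G' q (eK.symm j) * y (eK (eK.symm j)) := by
            rw [Equiv.sum_comp eK.symm (fun v => G' q v * y (eK v))]
        _ = cc q := by simpa using this

lemma my_sum_sigma {k : ℕ} {κ : Fin k → Type} [∀ i, Fintype (κ i)] (f : (Σ i, κ i) → ℝ) :
    ∑ q : Σ i, κ i, f q = ∑ i, ∑ j : κ i, f ⟨i, j⟩ := by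
  rw [← Finset.univ_sigma_univ, Finset.sum_sigma]

/-- dependent block dot product -/
lemma sum_sigma_dite {k : ℕ} {κ : Fin k → Type} [∀ i, Fintype (κ i)] (i : Fin k)
    (w : κ i → ℝ) (y : (Σ i', κ i') → ℝ) :
    (∑ q : Σ i', κ i', (if h : q.1 = i then w (h ▸ q.2) else 0) * y q)
      = ∑ j : κ i, w j * y ⟨i, j⟩ := by
  rw [my_sum_sigma]
  rw [Finset.sum_eq_single i]
  · simp
  · intro i' _ hne
    simp [hne]
  · simp

lemma sum_prod_ite {k : ℕ} {ι : Type} [Fintype ι] [DecidableEq (Fin k)] (i : Fin k)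
    (w : ι → ℝ) (y : Fin k × ι → ℝ) :
    (∑ q : Fin k × ι, (if q.1 = i then w q.2 else 0) * y q) = ∑ t, w t * y (i, t) := by
  rw [Fintype.sum_prod_type]
  rw [Finset.sum_eq_single i]
  · simp
  · intro i' _ hne
    simp [hne]
  · simp

lemma vrep_set {ι : Type} [Fintype ι] [DecidableEq ι] (s : Finset (ι → ℝ)) :
    convexHull ℝ (↑s : Set (ι → ℝ)) = {x : ι → ℝ | ∃ y : (↥s) → ℝ,
      (∀ i : ↥s, ∑ t : ι, (0:ℝ) * x t + ∑ j : ↥s, (if i = j then (-1:ℝ) else 0) * y j ≤ 0) ∧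
      (∀ q : ι ⊕ Unit, ∑ t, (Sum.elim (fun t u => if t = u then (1:ℝ) else 0) (fun _ _ => 0)) q t * x t
        + ∑ j : ↥s, (Sum.elim (fun (t : ι) (v : ↥s) => -((v : ι → ℝ) t)) (fun _ _ => 1)) q j * y j
        = Sum.elim (fun _ => (0:ℝ)) (fun _ => 1) q)} := by
  classical
  ext x
  rw [Finset.convexHull_eq]
  simp only [Set.mem_setOf_eq]
  constructor
  · rintro ⟨w, hw0, hw1, hwx⟩
    rw [Finset.centerMass_eq_of_sum_1 _ _ hw1] at hwx
    refine ⟨fun v => w v, fun v => ?_, ?_⟩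
    · simp only [zero_mul, Finset.sum_const_zero, zero_add, ite_mul, neg_mul, one_mul,
        zero_mul, Finset.sum_ite_eq, Finset.mem_univ, if_true]
      have : 0 ≤ w (v : ι → ℝ) := hw0 _ v.2
      linarith
    · rintro (t | u)
      · simp only [Sum.elim_inl, ite_mul, one_mul, zero_mul, Finset.sum_ite_eq,
          Finset.mem_univ, if_true]
        have hx : x t = ∑ v ∈ s, w v * v t := by
          rw [← hwx]
          simp [Finset.sum_apply]
        rw [hx, ← Finset.sum_coe_sort s (fun v => w v * v t), ← Finset.sum_add_distrib]
        rw [Finset.sum_eq_zero]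
        intro v _; ring
      · simp only [Sum.elim_inr, zero_mul, Finset.sum_const_zero, zero_add, one_mul]
        rw [Finset.sum_coe_sort s (fun v => w v)]
        exact hw1
  · rintro ⟨μ, hineq, heq⟩
    refine ⟨fun z => if h : z ∈ s then μ ⟨z, h⟩ else 0, ?_, ?_, ?_⟩
    · intro y hy
      have := hineq ⟨y, hy⟩
      simp only [zero_mul, Finset.sum_const_zero, zero_add, ite_mul, neg_mul, one_mul,
        zero_mul, Finset.sum_ite_eq, Finset.mem_univ, if_true] at this
      simp only [dif_pos hy]
      linarith
    · have := heq (Sum.inr ())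
      simp only [Sum.elim_inr, zero_mul, Finset.sum_const_zero, zero_add, one_mul] at this
      rw [← Finset.sum_coe_sort s (fun z => if h : z ∈ s then μ ⟨z, h⟩ else 0)]
      rw [← this]
      apply Finset.sum_congr rfl
      intro v _
      simp
    · have hsum : ∑ y ∈ s, (if h : y ∈ s then μ ⟨y, h⟩ else 0) = 1 := by
        have := heq (Sum.inr ())
        simp only [Sum.elim_inr, zero_mul, Finset.sum_const_zero, zero_add, one_mul] at this
        rw [← Finset.sum_coe_sort s (fun z => if h : z ∈ s then μ ⟨z, h⟩ else 0), ← this]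
        apply Finset.sum_congr rfl; intro v _; simp
      rw [Finset.centerMass_eq_of_sum_1 _ _ hsum]
      funext t
      have := heq (Sum.inl t)
      simp only [Sum.elim_inl, ite_mul, one_mul, zero_mul, Finset.sum_ite_eq,
        Finset.mem_univ, if_true] at this
      simp only [Finset.sum_apply, Pi.smul_apply, smul_eq_mul, id_eq]
      rw [← Finset.sum_coe_sort s (fun z => (if h : z ∈ s then μ ⟨z,h⟩ else 0) * z t)]
      have hxt : x t = ∑ v : ↥s, (v : ι → ℝ) t * μ v := by
        simp only [neg_mul, Finset.sum_neg_distrib] at this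
        linarith
      rw [hxt]
      apply Finset.sum_congr rfl
      intro v _
      simp only [v.2, dif_pos, Subtype.coe_eta]
      ring


lemma ray_eq_zero {ι : Type} [Fintype ι] (s : Finset (ι → ℝ)) (x₀ d : ι → ℝ)
    (h : ∀ t : ℝ, 0 ≤ t → x₀ + t • d ∈ convexHull ℝ (↑s : Set (ι → ℝ))) : d = 0 := by
  have hb : Bornology.IsBounded (convexHull ℝ (↑s : Set (ι → ℝ))) :=
    isBounded_convexHull.2 s.finite_toSet.isBounded
  obtain ⟨R, hR⟩ := isBounded_iff_forall_norm_le.1 hb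
  by_contra hd
  have hdn : 0 < ‖d‖ := norm_pos_iff.2 hd
  have hR0 : 0 ≤ R := le_trans (norm_nonneg _) (by simpa using hR _ (h 0 le_rfl))
  set t := (R + ‖x₀‖ + 1) / ‖d‖ with ht
  have ht0 : 0 ≤ t := div_nonneg (by linarith [norm_nonneg x₀]) hdn.le
  have h1 := hR _ (h t ht0)
  have h2 : t * ‖d‖ = ‖t • d‖ := by rw [norm_smul, Real.norm_eq_abs, abs_of_nonneg ht0]
  have h3 : ‖t • d‖ ≤ ‖x₀ + t • d‖ + ‖x₀‖ := by
    have := norm_add_le (x₀ + t • d) (-x₀)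
    simp at this
    linarith [this]
  have h4 : t * ‖d‖ = R + ‖x₀‖ + 1 := by
    rw [ht]; field_simp [hdn.ne']
  linarith

lemma vrep {ι : Type} [Fintype ι] [DecidableEq ι] (s : Finset (ι → ℝ)) :
    IsExtFormulation (convexHull ℝ (↑s : Set (ι → ℝ))) s.card := by
  have h := isExtFormulation_of_flex (convexHull ℝ (↑s : Set (ι → ℝ)))
    (↥s) (↥s) (ι ⊕ Unit)
    (fun _ _ => 0) (fun v w => if v = w then -1 else 0) (fun _ => 0)
    (Sum.elim (fun t u => if t = u then 1 else 0) (fun _ _ => 0))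
    (Sum.elim (fun (t : ι) (v : ↥s) => -((v : ι → ℝ) t)) (fun _ _ => 1))
    (Sum.elim (fun _ => 0) (fun _ => 1)) (vrep_set s)
  rwa [Fintype.card_coe] at h

/-- A singleton set has a purely-equational extended formulation, hence `xc = 0`. -/
lemma xc_singleton_eq_zero {ι : Type} [Fintype ι] (p₀ : ι → ℝ) :
    xc ({p₀} : Set (ι → ℝ)) = 0 := by
  classical
  have h0 : IsExtFormulation ({p₀} : Set (ι → ℝ)) 0 := by
    have h := isExtFormulation_of_flex ({p₀} : Set (ι → ℝ)) Empty Empty ι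
      (fun e => e.elim) (fun e => e.elim) (fun e => e.elim)
      (fun q t => if q = t then 1 else 0) (fun _ e => e.elim) (fun q => p₀ q) ?_
    · simpa using h
    · ext x
      simp only [Set.mem_singleton_iff, Set.mem_setOf_eq]
      constructor
      · rintro rfl
        exact ⟨fun e => e.elim, fun i => i.elim, fun q => by
          simp [ite_mul, Finset.sum_ite_eq, Finset.sum_empty]⟩
      · rintro ⟨y, -, heq⟩
        funext t
        have := heq t
        simpa [ite_mul, Finset.sum_ite_eq, Finset.sum_empty] using this
  unfold xc
  exact Nat.sInf_eq_zero.2 (Or.inl h0)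

/-- Core per-block lemma: a nonempty polytope has an extended formulation of size
`max 1 (xc P)` whose homogenization behaves well. -/
lemma blockform {ι : Type} [Fintype ι] [DecidableEq ι] (P : Set (ι → ℝ))
    (s : Finset (ι → ℝ)) (hs : s.Nonempty) (hPs : P = convexHull ℝ (↑s : Set (ι → ℝ))) :
    ∃ (MB KB QB : Type) (_ : Fintype MB) (_ : Fintype KB) (_ : Fintype QB),
      Fintype.card MB = max 1 (xc P) ∧
      ∃ (A : Matrix MB ι ℝ) (B : Matrix MB KB ℝ) (b : MB → ℝ)
        (C : Matrix QB ι ℝ) (D : Matrix QB KB ℝ) (c : QB → ℝ),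
        (∀ p ∈ P, ∃ y : KB → ℝ,
          (∀ i, A.mulVec p i + B.mulVec y i ≤ b i) ∧
          (∀ q, C.mulVec p q + D.mulVec y q = c q)) ∧
        (∀ (x : ι → ℝ) (y : KB → ℝ) (l : ℝ),
          (∀ i, A.mulVec x i + B.mulVec y i ≤ l * b i) →
          (∀ q, C.mulVec x q + D.mulVec y q = l * c q) →
          0 ≤ l ∧ ∃ p ∈ P, x = l • p) := by
  classical
  obtain ⟨v₀, hv₀s⟩ := hs
  have hv₀ : v₀ ∈ P := by
    rw [hPs]; exact subset_convexHull ℝ _ hv₀s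
  by_cases hsing : ∀ u ∈ P, ∀ v ∈ P, u = v
  -- singleton case
  · have hPeq : P = {v₀} := by
      apply Set.eq_singleton_iff_unique_mem.2
      exact ⟨hv₀, fun u hu => hsing u hu v₀ hv₀⟩
    have hxc : xc P = 0 := by rw [hPeq]; exact xc_singleton_eq_zero v₀
    refine ⟨Unit, Empty, ι, inferInstance, inferInstance, inferInstance, by simp [hxc], ?_⟩
    refine ⟨fun _ _ => 0, fun _ e => e.elim, fun _ => 1,
      fun q t => if q = t then 1 else 0, fun _ e => e.elim, fun q => v₀ q, ?_, ?_⟩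
    · intro p hp
      have hp' : p = v₀ := by rw [hPeq] at hp; exact hp
      subst hp'
      refine ⟨fun e => e.elim, fun i => ?_, fun q => ?_⟩
      · simp [Matrix.mulVec, dotProduct]
      · simp [Matrix.mulVec, dotProduct, ite_mul, Finset.sum_ite_eq]
    · intro x y l hineq heq
      have h1 : (0:ℝ) ≤ l := by
        have := hineq ()
        simpa [Matrix.mulVec, dotProduct] using this
      refine ⟨h1, v₀, hv₀, ?_⟩
      funext t
      have := heq t
      simp only [Matrix.mulVec, dotProduct, ite_mul, one_mul, zero_mul,
        Finset.sum_ite_eq, Finset.mem_univ, if_true] at this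
      simpa [Pi.smul_apply, smul_eq_mul, Finset.sum_empty] using this
  -- non-singleton case
  · push_neg at hsing
    obtain ⟨u, hu, v, hv, huv⟩ := hsing
    have hne : {m | IsExtFormulation P m}.Nonempty := ⟨s.card, by rw [hPs]; exact vrep s⟩
    have hmem : IsExtFormulation P (xc P) := Nat.sInf_mem hne
    obtain ⟨k, p, A, B, b, C, D, c, hform⟩ := hmem
    -- membership as an iff
    have hmemiff : ∀ z : ι → ℝ, z ∈ P ↔ ∃ y : Fin k → ℝ,
        (∀ i, A.mulVec z i + B.mulVec y i ≤ b i) ∧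
        (∀ j, C.mulVec z j + D.mulVec y j = c j) := by
      intro z; exact Set.ext_iff.1 hform z
    obtain ⟨yu, hyu1, hyu2⟩ := (hmemiff u).1 hu
    obtain ⟨yv, hyv1, hyv2⟩ := (hmemiff v).1 hv
    -- recession-cone lemma
    have L1 : ∀ (x : ι → ℝ) (y : Fin k → ℝ),
        (∀ i, A.mulVec x i + B.mulVec y i ≤ 0) →
        (∀ j, C.mulVec x j + D.mulVec y j = 0) → x = 0 := by
      intro x y h1 h2
      apply ray_eq_zero s u x
      intro t ht
      rw [← hPs, hmemiff]
      refine ⟨yu + t • y, fun i => ?_, fun j => ?_⟩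
      · have e1 : A.mulVec (u + t • x) i + B.mulVec (yu + t • y) i
            = (A.mulVec u i + B.mulVec yu i) + t * (A.mulVec x i + B.mulVec y i) := by
          simp [Matrix.mulVec_add, Matrix.mulVec_smul, Matrix.mulVec_neg, smul_eq_mul]
          ring
        rw [e1]
        have := mul_le_mul_of_nonneg_left (h1 i) ht
        have := hyu1 i
        nlinarith [mul_le_mul_of_nonneg_left (h1 i) ht]
      · have e1 : C.mulVec (u + t • x) j + D.mulVec (yu + t • y) j
            = (C.mulVec u j + D.mulVec yu j) + t * (C.mulVec x j + D.mulVec y j) := by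
          simp [Matrix.mulVec_add, Matrix.mulVec_smul, Matrix.mulVec_neg, smul_eq_mul]
          ring
        rw [e1, h2 j, hyu2 j]
        ring
    -- xc P ≥ 1
    have hxc1 : 1 ≤ xc P := by
      by_contra h
      push_neg at h
      have hray : ∀ t : ℝ, 0 ≤ t → u + t • (u - v) ∈ convexHull ℝ (↑s : Set (ι → ℝ)) := by
        intro t ht
        rw [← hPs, hmemiff]
        refine ⟨yu + t • (yu - yv), fun i => ?_, fun j => ?_⟩
        · exact absurd i.isLt (by omega)
        · have e1 : C.mulVec (u + t • (u - v)) j + D.mulVec (yu + t • (yu - yv)) j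
              = (C.mulVec u j + D.mulVec yu j)
                + t * ((C.mulVec u j + D.mulVec yu j) - (C.mulVec v j + D.mulVec yv j)) := by
            simp [Matrix.mulVec_add, Matrix.mulVec_smul, Matrix.mulVec_sub, smul_eq_mul]
            ring
          rw [e1, hyu2 j, hyv2 j]
          ring
      have := ray_eq_zero s u (u - v) hray
      exact huv (by rwa [sub_eq_zero] at this)
    refine ⟨Fin (xc P), Fin k, Fin p, inferInstance, inferInstance, inferInstance,
      by simp [Nat.max_eq_right hxc1], A, B, b, C, D, c, ?_, ?_⟩
    · intro z hz
      exact (hmemiff z).1 hz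
    · intro x y l hineq heq
      rcases lt_trichotomy l 0 with hl | hl | hl
      · exfalso
        have key : ∀ w : ι → ℝ, ∀ yw : Fin k → ℝ,
            (∀ i, A.mulVec w i + B.mulVec yw i ≤ b i) →
            (∀ j, C.mulVec w j + D.mulVec yw j = c j) →
            x + (-l) • w = 0 := by
          intro w yw hw1 hw2
          apply L1 _ (y + (-l) • yw)
          · intro i
            have e1 : A.mulVec (x + (-l) • w) i + B.mulVec (y + (-l) • yw) i
                = (A.mulVec x i + B.mulVec y i) + (-l) * (A.mulVec w i + B.mulVec yw i) := by
              simp [Matrix.mulVec_add, Matrix.mulVec_smul, Matrix.mulVec_neg, smul_eq_mul]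
              ring
            rw [e1]
            have h2 := mul_le_mul_of_nonneg_left (hw1 i) (by linarith : (0:ℝ) ≤ -l)
            have h3 := hineq i
            linarith
          · intro j
            have e1 : C.mulVec (x + (-l) • w) j + D.mulVec (y + (-l) • yw) j
                = (C.mulVec x j + D.mulVec y j) + (-l) * (C.mulVec w j + D.mulVec yw j) := by
              simp [Matrix.mulVec_add, Matrix.mulVec_smul, Matrix.mulVec_neg, smul_eq_mul]
              ring
            rw [e1, heq j, hw2 j]
            ring
        have hxu := key u yu hyu1 hyu2
        have hxv := key v yv hyv1 hyv2
        have h5 : (-l) • u = (-l) • v := add_left_cancel (hxu.trans hxv.symm)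
        exact huv (smul_right_injective (ι → ℝ) (ne_of_gt (by linarith : (0:ℝ) < -l)) h5)
      · subst hl
        refine ⟨le_refl 0, u, hu, ?_⟩
        rw [zero_smul]
        exact L1 x y (by simpa using hineq) (by simpa using heq)
      · refine ⟨le_of_lt hl, l⁻¹ • x, ?_, (smul_inv_smul₀ (ne_of_gt hl) x).symm⟩
        rw [hmemiff]
        refine ⟨l⁻¹ • y, fun i => ?_, fun j => ?_⟩
        · have e1 : A.mulVec (l⁻¹ • x) i + B.mulVec (l⁻¹ • y) i
              = l⁻¹ * (A.mulVec x i + B.mulVec y i) := by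
            simp [Matrix.mulVec_smul, smul_eq_mul]; ring
          rw [e1]
          have h2 := mul_le_mul_of_nonneg_left (hineq i) (by positivity : (0:ℝ) ≤ l⁻¹)
          calc l⁻¹ * (A.mulVec x i + B.mulVec y i) ≤ l⁻¹ * (l * b i) := h2
            _ = b i := by field_simp
        · have e1 : C.mulVec (l⁻¹ • x) j + D.mulVec (l⁻¹ • y) j
              = l⁻¹ * (C.mulVec x j + D.mulVec y j) := by
            simp [Matrix.mulVec_smul, smul_eq_mul]; ring
          rw [e1, heq j]
          field_simp


lemma flexset_convex {ι : Type} [Fintype ι]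
    (M K Q : Type) [Fintype M] [Fintype K] [Fintype Q]
    (F : M → ι → ℝ) (G : M → K → ℝ) (bb : M → ℝ)
    (F' : Q → ι → ℝ) (G' : Q → K → ℝ) (cc : Q → ℝ) :
    Convex ℝ {x : ι → ℝ | ∃ y : K → ℝ,
      (∀ i, ∑ s, F i s * x s + ∑ j, G i j * y j ≤ bb i) ∧
      (∀ q, ∑ s, F' q s * x s + ∑ j, G' q j * y j = cc q)} := by
  rintro x₁ ⟨y₁, h₁i, h₁e⟩ x₂ ⟨y₂, h₂i, h₂e⟩ a b ha hb hab
  refine ⟨a • y₁ + b • y₂, fun i => ?_, fun q => ?_⟩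
  · have key : ∑ s, F i s * (a • x₁ + b • x₂) s + ∑ j, G i j * (a • y₁ + b • y₂) j
        = a * (∑ s, F i s * x₁ s + ∑ j, G i j * y₁ j)
          + b * (∑ s, F i s * x₂ s + ∑ j, G i j * y₂ j) := by
      calc ∑ s, F i s * (a • x₁ + b • x₂) s + ∑ j, G i j * (a • y₁ + b • y₂) j
          = ∑ s, (a * (F i s * x₁ s) + b * (F i s * x₂ s))
            + ∑ j, (a * (G i j * y₁ j) + b * (G i j * y₂ j)) := by
            congr 1 <;>
            · apply Finset.sum_congr rfl
              intro t _
              simp only [Pi.add_apply, Pi.smul_apply, smul_eq_mul]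
              ring
        _ = _ := by
            simp only [Finset.sum_add_distrib, ← Finset.mul_sum]; ring
    rw [key]
    have k1 := mul_le_mul_of_nonneg_left (h₁i i) ha
    have k2 := mul_le_mul_of_nonneg_left (h₂i i) hb
    have k3 : a * bb i + b * bb i = bb i := by rw [← add_mul, hab, one_mul]
    linarith [k1, k2, k3]
  · have key : ∑ s, F' q s * (a • x₁ + b • x₂) s + ∑ j, G' q j * (a • y₁ + b • y₂) j
        = a * (∑ s, F' q s * x₁ s + ∑ j, G' q j * y₁ j)
          + b * (∑ s, F' q s * x₂ s + ∑ j, G' q j * y₂ j) := by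
      calc ∑ s, F' q s * (a • x₁ + b • x₂) s + ∑ j, G' q j * (a • y₁ + b • y₂) j
          = ∑ s, (a * (F' q s * x₁ s) + b * (F' q s * x₂ s))
            + ∑ j, (a * (G' q j * y₁ j) + b * (G' q j * y₂ j)) := by
            congr 1 <;>
            · apply Finset.sum_congr rfl
              intro t _
              simp only [Pi.add_apply, Pi.smul_apply, smul_eq_mul]
              ring
        _ = _ := by
            simp only [Finset.sum_add_distrib, ← Finset.mul_sum]; ring
    rw [key, h₁e q, h₂e q]
    linear_combination (cc q) * hab

lemma balas_set {ι : Type} [Fintype ι] [DecidableEq ι] {k : ℕ} (P : Fin k → Set (ι → ℝ))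
    (MB KB QB : Fin k → Type) [∀ i, Fintype (MB i)] [∀ i, Fintype (KB i)] [∀ i, Fintype (QB i)]
    (A : ∀ i, Matrix (MB i) ι ℝ) (B : ∀ i, Matrix (MB i) (KB i) ℝ) (b : ∀ i, MB i → ℝ)
    (C : ∀ i, Matrix (QB i) ι ℝ) (D : ∀ i, Matrix (QB i) (KB i) ℝ) (c : ∀ i, QB i → ℝ)
    (hH2 : ∀ i, ∀ p ∈ P i, ∃ y : KB i → ℝ,
      (∀ r, (A i).mulVec p r + (B i).mulVec y r ≤ b i r) ∧
      (∀ q, (C i).mulVec p q + (D i).mulVec y q = c i q))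
    (hH : ∀ i (x : ι → ℝ) (y : KB i → ℝ) (l : ℝ),
      (∀ r, (A i).mulVec x r + (B i).mulVec y r ≤ l * b i r) →
      (∀ q, (C i).mulVec x q + (D i).mulVec y q = l * c i q) →
      0 ≤ l ∧ ∃ p ∈ P i, x = l • p) :
    convexHull ℝ (⋃ i, P i) = {x : ι → ℝ |
      ∃ y : (((Fin k × ι) ⊕ ((i : Fin k) × KB i)) ⊕ Fin k) → ℝ,
      (∀ m : (i : Fin k) × MB i, ∑ t, (0:ℝ) * x t + ∑ v, (Sum.elim (Sum.elim
          (fun it => if it.1 = m.1 then A m.1 m.2 it.2 else 0)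
          (fun ij => if h : ij.1 = m.1 then B m.1 m.2 (h ▸ ij.2) else 0))
          (fun i' => if i' = m.1 then -(b m.1 m.2) else 0) v) * y v ≤ 0) ∧
      (∀ q : (ι ⊕ ((i : Fin k) × QB i)) ⊕ Unit,
        ∑ t, (Sum.elim (Sum.elim (fun t0 t' => if t' = t0 then (1:ℝ) else 0) (fun _ _ => 0))
          (fun _ _ => 0) q t) * x t
        + ∑ v, (Sum.elim (Sum.elim
            (fun t0 => Sum.elim (Sum.elim (fun it => if it.2 = t0 then (-1:ℝ) else 0)
              (fun _ => 0)) (fun _ => 0))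
            (fun iq => Sum.elim (Sum.elim
              (fun it => if it.1 = iq.1 then C iq.1 iq.2 it.2 else 0)
              (fun ij => if h : ij.1 = iq.1 then D iq.1 iq.2 (h ▸ ij.2) else 0))
              (fun i' => if i' = iq.1 then -(c iq.1 iq.2) else 0)))
          (fun _ => Sum.elim (Sum.elim (fun _ => 0) (fun _ => 0)) (fun _ => (1:ℝ))) q v) * y v
        = Sum.elim (fun _ => (0:ℝ)) (fun _ => 1) q)} := by
  classical
  have rowK : ∀ (y : (((Fin k × ι) ⊕ ((i : Fin k) × KB i)) ⊕ Fin k) → ℝ) (i : Fin k)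
      (AA : ι → ℝ) (BB : KB i → ℝ) (bb : ℝ),
      (∑ v, (Sum.elim (Sum.elim
          (fun it => if it.1 = i then AA it.2 else 0)
          (fun ij => if h : ij.1 = i then BB (h ▸ ij.2) else 0))
          (fun i' => if i' = i then -bb else 0) v) * y v)
        = (∑ t, AA t * y (.inl (.inl (i, t))))
          + (∑ j, BB j * y (.inl (.inr ⟨i, j⟩))) - bb * y (.inr i) := by
    intro y i AA BB bb
    rw [Fintype.sum_sum_type]
    simp only [Sum.elim_inl, Sum.elim_inr]
    rw [Fintype.sum_sum_type]
    simp only [Sum.elim_inl, Sum.elim_inr]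
    rw [sum_prod_ite i AA (fun it => y (.inl (.inl it)))]
    rw [sum_sigma_dite i BB (fun ij => y (.inl (.inr ij)))]
    simp only [ite_mul, zero_mul, neg_mul, Finset.sum_ite_eq', Finset.mem_univ, if_true]
    ring
  have rowC : ∀ (y : (((Fin k × ι) ⊕ ((i : Fin k) × KB i)) ⊕ Fin k) → ℝ) (t0 : ι),
      (∑ v, (Sum.elim (Sum.elim (fun it => if it.2 = t0 then (-1:ℝ) else 0)
          (fun _ => 0)) (fun _ => 0) v) * y v)
        = -∑ i, y (.inl (.inl (i, t0))) := by
    intro y t0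
    rw [Fintype.sum_sum_type]
    simp only [Sum.elim_inl, Sum.elim_inr]
    rw [Fintype.sum_sum_type]
    simp only [Sum.elim_inl, Sum.elim_inr, zero_mul, Finset.sum_const_zero, add_zero]
    rw [Fintype.sum_prod_type]
    simp only [ite_mul, neg_mul, one_mul, zero_mul, Finset.sum_ite_eq', Finset.mem_univ,
      if_true, Finset.sum_neg_distrib]
  have rowL : ∀ (y : (((Fin k × ι) ⊕ ((i : Fin k) × KB i)) ⊕ Fin k) → ℝ),
      (∑ v, (Sum.elim (Sum.elim (fun (_ : Fin k × ι) => (0:ℝ))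
          (fun (_ : (i : Fin k) × KB i) => (0:ℝ))) (fun (_ : Fin k) => (1:ℝ)) v) * y v)
        = ∑ i, y (.inr i) := by
    intro y
    rw [Fintype.sum_sum_type]
    simp only [Sum.elim_inl, Sum.elim_inr]
    rw [Fintype.sum_sum_type]
    simp
  apply Set.Subset.antisymm
  · apply convexHull_min
    · intro z hz
      rw [Set.mem_iUnion] at hz
      obtain ⟨i, hzi⟩ := hz
      obtain ⟨yp, hyp1, hyp2⟩ := hH2 i z hzi
      simp only [Matrix.mulVec, dotProduct] at hyp1 hyp2
      set yc : (((Fin k × ι) ⊕ ((i : Fin k) × KB i)) ⊕ Fin k) → ℝ :=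
        Sum.elim (Sum.elim (fun it => if it.1 = i then z it.2 else 0)
          (fun ij => if h : ij.1 = i then yp (h ▸ ij.2) else 0))
          (fun i' => if i' = i then 1 else 0) with hyc
      have hv1 : ∀ (i' : Fin k) (t : ι), yc (.inl (.inl (i', t))) = if i' = i then z t else 0 :=
        fun _ _ => rfl
      have hv2 : ∀ (i' : Fin k) (j : KB i'), yc (.inl (.inr ⟨i', j⟩))
          = if h : i' = i then yp (h ▸ j) else 0 := fun _ _ => rfl
      have hv3 : ∀ i', yc (.inr i') = if i' = i then 1 else 0 := fun _ => rfl
      refine ⟨yc, fun m => ?_, fun q => ?_⟩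
      · obtain ⟨i', r⟩ := m
        simp only [zero_mul, Finset.sum_const_zero, zero_add]
        rw [rowK yc i' (A i' r) (B i' r) (b i' r)]
        simp only [hv1, hv2, hv3]
        rcases eq_or_ne i' i with rfl | h
        · simp only [if_pos rfl, dif_pos rfl, mul_one, eq_self_iff_true, if_true, dite_true,
            mul_ite, mul_zero]
          have h1 := hyp1 r
          linarith [h1]
        · simp [h]
      · rcases q with (t0 | ⟨i', j⟩) | u
        · simp only [Sum.elim_inl, Sum.elim_inr]
          rw [rowC yc t0]
          simp only [hv1]
          have e0 : (∑ t, (if t = t0 then (1:ℝ) else 0) * z t) = z t0 := by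
            simp [ite_mul]
          rw [e0]
          rw [Finset.sum_ite_eq' Finset.univ i (fun _ => z t0)]
          simp
        · simp only [Sum.elim_inl, Sum.elim_inr]
          rw [rowK yc i' (C i' j) (D i' j) (c i' j)]
          simp only [hv1, hv2, hv3, zero_mul, Finset.sum_const_zero, zero_add]
          rcases eq_or_ne i' i with rfl | h
          · simp only [if_pos rfl, dif_pos rfl, mul_one, eq_self_iff_true, if_true, dite_true,
              mul_ite, mul_zero]
            have h2 := hyp2 j
            linarith [h2]
          · simp [h]
        · simp only [Sum.elim_inl, Sum.elim_inr]
          rw [rowL yc]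
          simp only [hv3, zero_mul, Finset.sum_const_zero, zero_add]
          rw [Finset.sum_ite_eq' Finset.univ i (fun _ => (1:ℝ))]
          simp
    · exact flexset_convex _ _ _ _ _ _ _ _ _
  · rintro x ⟨y, hineq, heqs⟩
    have hblock : ∀ i : Fin k, 0 ≤ y (.inr i) ∧
        ∃ p ∈ P i, (fun t => y (.inl (.inl (i, t)))) = y (.inr i) • p := by
      intro i
      apply hH i _ (fun j => y (.inl (.inr ⟨i, j⟩))) (y (.inr i))
      · intro r
        have h1 := hineq ⟨i, r⟩
        simp only [zero_mul, Finset.sum_const_zero, zero_add] at h1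
        rw [rowK _ i (A i r) (B i r) (b i r)] at h1
        simp only [Matrix.mulVec, dotProduct]
        linarith
      · intro q
        have h2 := heqs (.inl (.inr ⟨i, q⟩))
        simp only [Sum.elim_inl, Sum.elim_inr, zero_mul, Finset.sum_const_zero, zero_add] at h2
        rw [rowK _ i (C i q) (D i q) (c i q)] at h2
        simp only [Matrix.mulVec, dotProduct]
        linarith
    choose hl0 p hp hX using hblock
    have hsum1 : ∑ i, y (.inr i) = 1 := by
      have h3 := heqs (.inr ())
      simp only [Sum.elim_inl, Sum.elim_inr, zero_mul, Finset.sum_const_zero, zero_add] at h3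
      rw [rowL] at h3
      linarith
    have hx : ∑ i, y (.inr i) • p i = x := by
      funext t
      have h4 := heqs (.inl (.inl t))
      simp only [Sum.elim_inl, Sum.elim_inr] at h4
      rw [rowC] at h4
      have e0 : (∑ t', (if t' = t then (1:ℝ) else 0) * x t') = x t := by
        simp [ite_mul, Finset.sum_ite_eq', Finset.mem_univ]
      rw [e0] at h4
      have e1 : ∀ i, y (.inl (.inl (i, t))) = y (.inr i) * p i t := by
        intro i
        have := congrFun (hX i) t
        simpa using this
      simp only [Finset.sum_apply, Pi.smul_apply, smul_eq_mul]
      rw [Finset.sum_congr rfl (fun i _ => (e1 i).symm)]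
      linarith
    exact mem_convexHull_of_exists_fintype (fun i => y (.inr i)) p hl0 hsum1
      (fun i => Set.mem_iUnion.2 ⟨i, hp i⟩) hx

set_option maxHeartbeats 2000000 in
/-- **Balas' union of polytopes.** Let `P₁, …, P_k` be non-empty polytopes in `ℝ^d`
(i.e. convex hulls of non-empty finite point sets) and let `P = conv(P₁ ∪ ⋯ ∪ P_k)`.
Then `xc(P) ≤ ∑_{i=1}^k max{1, xc(P_i)}`. -/
theorem xc_convexHull_iUnion_le {ι : Type} [Fintype ι] (k : ℕ) (P : Fin k → Set (ι → ℝ))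
    (hP : ∀ i, ∃ s : Finset (ι → ℝ), s.Nonempty ∧ P i = convexHull ℝ (↑s : Set (ι → ℝ))) :
    xc (convexHull ℝ (⋃ i, P i)) ≤ ∑ i, max 1 (xc (P i)) := by
  classical
  choose s hs hPs using hP
  choose MB KB QB iM iK iQ hcard A B b C D c hH2 hH using
    fun i => blockform (P i) (s i) (hs i) (hPs i)
  letI : ∀ i, Fintype (MB i) := iM
  letI : ∀ i, Fintype (KB i) := iK
  letI : ∀ i, Fintype (QB i) := iQ
  have hset := balas_set P MB KB QB A B b C D c hH2 hH
  have hflex := isExtFormulation_of_flex (convexHull ℝ (⋃ i, P i))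
    ((i : Fin k) × MB i) (((Fin k × ι) ⊕ ((i : Fin k) × KB i)) ⊕ Fin k)
    ((ι ⊕ ((i : Fin k) × QB i)) ⊕ Unit)
    (fun _ _ => 0)
    (fun m v => Sum.elim (Sum.elim
        (fun it => if it.1 = m.1 then A m.1 m.2 it.2 else 0)
        (fun ij => if h : ij.1 = m.1 then B m.1 m.2 (h ▸ ij.2) else 0))
        (fun i' => if i' = m.1 then -(b m.1 m.2) else 0) v)
    (fun _ => 0)
    (fun q t => Sum.elim (Sum.elim (fun t0 t' => if t' = t0 then (1:ℝ) else 0) (fun _ _ => 0))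
      (fun _ _ => 0) q t)
    (fun q v => Sum.elim (Sum.elim
        (fun t0 => Sum.elim (Sum.elim (fun it => if it.2 = t0 then (-1:ℝ) else 0)
          (fun _ => 0)) (fun _ => 0))
        (fun iq => Sum.elim (Sum.elim
          (fun it => if it.1 = iq.1 then C iq.1 iq.2 it.2 else 0)
          (fun ij => if h : ij.1 = iq.1 then D iq.1 iq.2 (h ▸ ij.2) else 0))
          (fun i' => if i' = iq.1 then -(c iq.1 iq.2) else 0)))
      (fun _ => Sum.elim (Sum.elim (fun _ => 0) (fun _ => 0)) (fun _ => (1:ℝ))) q v)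
    (Sum.elim (fun _ => (0:ℝ)) (fun _ => 1)) hset
  have hcardeq : Fintype.card ((i : Fin k) × MB i) = ∑ i, max 1 (xc (P i)) := by
    rw [Fintype.card_sigma]
    exact Finset.sum_congr rfl (fun i _ => hcard i)
  rw [hcardeq] at hflex
  exact Nat.sInf_le hflex
end

section
/- Let G = (V,E) be a finite connected simple graph and let X ⊆ V be a proper non-empty set of vertices. Then the non-empty subgraph polytope of G decomposes as NESUBP(G) = conv( NESUBP(G−X) ∪ ⋃_{v ∈ X} ( SUBP(G) ∩ {(x,y) ∈ R^V × R^E | x_v = 1} ) ), where NESUBP(G−X) is canonically embedded in R^V × R^E by setting all coordinates indexed by vertices in X and by edges incident to X equal to 0. -/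
/-- The point `(χ^S, χ^F) ∈ ℝ^V × ℝ^E` (identified with `ℝ^(V ⊕ E)`). -/
noncomputable def charVec {V : Type} (G : SimpleGraph V) (S : Set V) (F : Set (Sym2 V)) :
    V ⊕ ↥G.edgeSet → ℝ :=
  Sum.elim (S.indicator 1) (fun e => F.indicator 1 (e : Sym2 V))

/-- The subgraph polytope of `G`:
`conv{(χ^S, χ^F) | S ⊆ V, F ⊆ E(S)}`, where `E(S)` is the set of edges of `G`
with both endpoints in `S`. -/
noncomputable def subp {V : Type} (G : SimpleGraph V) : Set (V ⊕ ↥G.edgeSet → ℝ) :=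
  convexHull ℝ {z | ∃ (S : Set V) (F : Set (Sym2 V)),
    F ⊆ G.edgeSet ∧ (∀ e ∈ F, ∀ w ∈ e, w ∈ S) ∧ z = charVec G S F}

/-- The non-empty subgraph polytope of `G`:
`conv{(χ^S, χ^F) | ∅ ⊊ S ⊆ V, F ⊆ E(S)}`. -/
noncomputable def nesubp {V : Type} (G : SimpleGraph V) : Set (V ⊕ ↥G.edgeSet → ℝ) :=
  convexHull ℝ {z | ∃ (S : Set V) (F : Set (Sym2 V)), S.Nonempty ∧
    F ⊆ G.edgeSet ∧ (∀ e ∈ F, ∀ w ∈ e, w ∈ S) ∧ z = charVec G S F}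

/-- The non-empty subgraph polytope of `G − X`, canonically embedded in
`ℝ^V × ℝ^E` by setting all coordinates indexed by vertices of `X` and by edges
incident to `X` equal to `0`: it is the convex hull of the points `(χ^S, χ^F)`
with `∅ ⊊ S ⊆ V ∖ X` and `F ⊆ E(S)` (edges of `G` with both endpoints in `S`,
which are exactly the edges of `G − X` with both endpoints in `S`). -/
noncomputable def nesubpDel {V : Type} (G : SimpleGraph V) (X : Set V) :
    Set (V ⊕ ↥G.edgeSet → ℝ) :=
  convexHull ℝ {z | ∃ (S : Set V) (F : Set (Sym2 V)), S.Nonempty ∧ Disjoint S X ∧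
    F ⊆ G.edgeSet ∧ (∀ e ∈ F, ∀ w ∈ e, w ∈ S) ∧ z = charVec G S F}

lemma mem_nesubp_of_coord_one {V : Type} (G : SimpleGraph V) (v : V)
    {z : V ⊕ ↥G.edgeSet → ℝ} (hz : z ∈ subp G) (hv : z (Sum.inl v) = 1) :
    z ∈ nesubp G := by
  rw [subp, convexHull_eq] at hz
  obtain ⟨ι, t, w, p, hw0, hw1, hp, rfl⟩ := hz
  classical
  have hcoord : ∑ i ∈ t, w i * p i (Sum.inl v) = 1 := by
    rw [Finset.centerMass_eq_of_sum_1 t p hw1] at hv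
    simpa [Finset.sum_apply] using hv
  have hle : ∀ i ∈ t, w i * p i (Sum.inl v) ≤ w i * 1 := by
    intro i hi
    obtain ⟨S, F, hF, hFS, hpe⟩ := hp i hi
    refine mul_le_mul_of_nonneg_left ?_ (hw0 i hi)
    rw [hpe]
    by_cases hvS : v ∈ S <;> simp [charVec, Set.indicator_apply, hvS]
  have heq : ∀ i ∈ t, w i * p i (Sum.inl v) = w i * 1 :=
    (Finset.sum_eq_sum_iff_of_le hle).mp (by simpa [hw1] using hcoord)
  rw [nesubp, ← Finset.centerMass_filter_ne_zero (z := p)]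
  apply Finset.centerMass_mem_convexHull
  · intro i hi
    exact hw0 i (Finset.mem_filter.mp hi).1
  · rw [Finset.sum_filter_ne_zero, hw1]; norm_num
  · intro i hi
    obtain ⟨hit, hwi⟩ := Finset.mem_filter.mp hi
    obtain ⟨S, F, hF, hFS, hpe⟩ := hp i hit
    have h1 : p i (Sum.inl v) = 1 := mul_left_cancel₀ hwi (heq i hit)
    have hvS : v ∈ S := by
      by_contra hvS
      rw [hpe] at h1
      simp [charVec, Set.indicator_apply, hvS] at h1
    exact ⟨S, F, ⟨v, hvS⟩, hF, hFS, hpe⟩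

/-- Let `G = (V, E)` be a finite connected simple graph and `X ⊆ V` a proper non-empty
set of vertices. Then the non-empty subgraph polytope of `G` decomposes as
`NESUBP(G) = conv( NESUBP(G−X) ∪ ⋃_{v ∈ X} (SUBP(G) ∩ {(x,y) | x_v = 1}) )`,
where `NESUBP(G−X)` is canonically embedded in `ℝ^V × ℝ^E`. -/
theorem nesubp_eq_convexHull_union {V : Type} [Fintype V] [DecidableEq V]
    (G : SimpleGraph V) (hG : G.Connected) (X : Set V)
    (hX : X.Nonempty) (hXV : X ≠ Set.univ) :
    nesubp G = convexHull ℝ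
      (nesubpDel G X ∪ ⋃ v ∈ X, (subp G ∩ {z | z (Sum.inl v) = 1})) := by
  apply Set.Subset.antisymm
  · rw [nesubp]
    apply convexHull_min _ (convex_convexHull ℝ _)
    rintro z ⟨S, F, hS, hF, hFS, rfl⟩
    apply subset_convexHull
    by_cases h : (S ∩ X).Nonempty
    · obtain ⟨v, hvS, hvX⟩ := h
      right
      refine Set.mem_biUnion hvX ⟨?_, ?_⟩
      · exact subset_convexHull ℝ _ ⟨S, F, hF, hFS, rfl⟩
      · simp [charVec, Set.indicator_apply, hvS]
    · left
      exact subset_convexHull ℝ _ ⟨S, F, hS,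
        Set.disjoint_iff_inter_eq_empty.mpr (Set.not_nonempty_iff_eq_empty.mp h), hF, hFS, rfl⟩
  · apply convexHull_min _ (by rw [nesubp]; exact convex_convexHull ℝ _)
    rintro z (hz | hz)
    · rw [nesubpDel] at hz
      rw [nesubp]
      refine convexHull_mono ?_ hz
      rintro y ⟨S, F, hS, _, hF, hFS, rfl⟩
      exact ⟨S, F, hS, hF, hFS, rfl⟩
    · simp only [Set.mem_iUnion] at hz
      obtain ⟨v, hvX, hzs, hzv⟩ := hz
      exact mem_nesubp_of_coord_one G v hzs hzv
end

section
/- Let G = (V,E) be a finite connected simple graph and X ⊆ V a set of vertices. Then xc(NESUBP(G)) ≤ xc(NESUBP(G−X)) + |X|·(3|E| + |V| + 1), where if X = V the term xc(NESUBP(G−X)) is taken to be 0. In particular, xc(NESUBP(G)) ≤ xc(NESUBP(G−X)) + O(|X|·|E|). -/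
namespace XCAux
open scoped Classical

/-- Bridge: an extended formulation indexed by arbitrary finite types. -/
lemma isEF_of {ι R Y Q : Type} [Fintype ι] [Fintype R] [Fintype Y] [Fintype Q]
    (P : Set (ι → ℝ)) (A : R → ι → ℝ) (B : R → Y → ℝ) (b : R → ℝ)
    (C : Q → ι → ℝ) (D : Q → Y → ℝ) (c : Q → ℝ)
    (h : P = {x | ∃ y : Y → ℝ, (∀ i, (∑ j, A i j * x j) + (∑ j, B i j * y j) ≤ b i) ∧
        (∀ q, (∑ j, C q j * x j) + (∑ j, D q j * y j) = c q)}) :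
    IsExtFormulation P (Fintype.card R) := by
  classical
  let eR : R ≃ Fin (Fintype.card R) := Fintype.equivFin R
  let eY : Y ≃ Fin (Fintype.card Y) := Fintype.equivFin Y
  let eQ : Q ≃ Fin (Fintype.card Q) := Fintype.equivFin Q
  refine ⟨Fintype.card Y, Fintype.card Q,
    Matrix.of (fun i j => A (eR.symm i) j),
    Matrix.of (fun i j => B (eR.symm i) (eY.symm j)), fun i => b (eR.symm i),
    Matrix.of (fun q j => C (eQ.symm q) j),
    Matrix.of (fun q j => D (eQ.symm q) (eY.symm j)), fun q => c (eQ.symm q), ?_⟩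
  rw [h]
  ext x
  simp only [Set.mem_setOf_eq, Matrix.mulVec, dotProduct, Matrix.of_apply]
  constructor
  · rintro ⟨y, h1, h2⟩
    refine ⟨fun j => y (eY.symm j), fun i => ?_, fun q => ?_⟩
    · have := h1 (eR.symm i)
      rwa [← Equiv.sum_comp eY.symm (fun j => B (eR.symm i) j * y j)] at this
    · have := h2 (eQ.symm q)
      rwa [← Equiv.sum_comp eY.symm (fun j => D (eQ.symm q) j * y j)] at this
  · rintro ⟨y, h1, h2⟩
    refine ⟨fun j => y (eY j), fun i => ?_, fun q => ?_⟩
    · have := h1 (eR i)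
      simp only [Equiv.symm_apply_apply] at this
      rw [← Equiv.sum_comp eY.symm (fun j => B i j * y (eY j))]
      simpa using this
    · have := h2 (eQ q)
      simp only [Equiv.symm_apply_apply] at this
      rw [← Equiv.sum_comp eY.symm (fun j => D q j * y (eY j))]
      simpa using this


variable {V : Type} (G : SimpleGraph V)


/-- Generators of the `v ∈ S` piece. -/
def gensV (v : V) : Set (V ⊕ ↥G.edgeSet → ℝ) :=
  {z | ∃ (S : Set V) (F : Set (Sym2 V)), v ∈ S ∧
    F ⊆ G.edgeSet ∧ (∀ e ∈ F, ∀ w ∈ e, w ∈ S) ∧ z = charVec G S F}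

def gensDel (X : Set V) : Set (V ⊕ ↥G.edgeSet → ℝ) :=
  {z | ∃ (S : Set V) (F : Set (Sym2 V)), S.Nonempty ∧ Disjoint S X ∧
    F ⊆ G.edgeSet ∧ (∀ e ∈ F, ∀ w ∈ e, w ∈ S) ∧ z = charVec G S F}

def gensNe : Set (V ⊕ ↥G.edgeSet → ℝ) :=
  {z | ∃ (S : Set V) (F : Set (Sym2 V)), S.Nonempty ∧
    F ⊆ G.edgeSet ∧ (∀ e ∈ F, ∀ w ∈ e, w ∈ S) ∧ z = charVec G S F}

variable {G}

lemma charVec_inl (S : Set V) (F : Set (Sym2 V)) (w : V) :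
    charVec G S F (Sum.inl w) = if w ∈ S then 1 else 0 := by
  classical
  simp [charVec, Set.indicator_apply]

lemma charVec_inr (S : Set V) (F : Set (Sym2 V)) (e : ↥G.edgeSet) :
    charVec G S F (Sum.inr e) = if (e : Sym2 V) ∈ F then 1 else 0 := by
  classical
  simp [charVec, Set.indicator_apply]

lemma gensNe_eq_union (X : Finset V) :
    gensNe G = (⋃ v ∈ X, gensV G v) ∪ gensDel G (↑X : Set V) := by
  ext z
  constructor
  · rintro ⟨S, F, hS, hF, hFS, rfl⟩
    by_cases h : (S ∩ ↑X).Nonempty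
    · obtain ⟨v, hvS, hvX⟩ := h
      exact Or.inl (Set.mem_biUnion hvX ⟨S, F, hvS, hF, hFS, rfl⟩)
    · refine Or.inr ⟨S, F, hS, ?_, hF, hFS, rfl⟩
      rw [Set.not_nonempty_iff_eq_empty] at h
      exact Set.disjoint_iff_inter_eq_empty.2 h
  · rintro (h | h)
    · simp only [Set.mem_iUnion] at h
      obtain ⟨v, _, S, F, hv, hF, hFS, rfl⟩ := h
      exact ⟨S, F, ⟨v, hv⟩, hF, hFS, rfl⟩
    · obtain ⟨S, F, hS, _, hF, hFS, rfl⟩ := h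
      exact ⟨S, F, hS, hF, hFS, rfl⟩

/-- Arbitrary collections of characteristic vectors have coordinates in `[0,1]`;
in particular so does their convex hull. -/
lemma mem_hull_bounds {gs : Set (V ⊕ ↥G.edgeSet → ℝ)}
    (hgs : ∀ z ∈ gs, ∀ i, 0 ≤ z i ∧ z i ≤ 1) :
    ∀ z ∈ convexHull ℝ gs, ∀ i, 0 ≤ z i ∧ z i ≤ 1 := by
  intro z hz
  have hconv : Convex ℝ {z : V ⊕ ↥G.edgeSet → ℝ | ∀ i, 0 ≤ z i ∧ z i ≤ 1} := by
    intro p hp q hq a b ha hb hab i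
    have h1 := (hp i); have h2 := (hq i)
    constructor
    · have : (a • p + b • q) i = a * p i + b * q i := by simp
      rw [this]; nlinarith [h1.1, h2.1]
    · have : (a • p + b • q) i = a * p i + b * q i := by simp
      rw [this]; nlinarith [h1.2, h2.2]
  exact convexHull_min hgs hconv hz

lemma gens_bounds {z : V ⊕ ↥G.edgeSet → ℝ} {S : Set V} {F : Set (Sym2 V)}
    (hz : z = charVec G S F) : ∀ i, 0 ≤ z i ∧ z i ≤ 1 := by
  subst hz
  intro i
  cases i with
  | inl w => rw [charVec_inl]; split <;> norm_num
  | inr e => rw [charVec_inr]; split <;> norm_num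



variable [Fintype V]

/-- The finset of positive values of `z`. -/
noncomputable def posVals (z : V ⊕ ↥G.edgeSet → ℝ) : Finset ℝ :=
  (Finset.univ.image z).filter (fun t => 0 < t)

/-- Key integrality lemma: a vector satisfying the linear description of the
face `x_v = 1` of the subgraph polytope lies in the convex hull of the integral
generators containing `v`. -/
lemma mem_hull_gensV (v : V) (z : V ⊕ ↥G.edgeSet → ℝ)
    (h0 : ∀ i, 0 ≤ z i)
    (hle : ∀ e : ↥G.edgeSet, ∀ u ∈ (e : Sym2 V), z (Sum.inr e) ≤ z (Sum.inl u))
    (h1 : ∀ w, z (Sum.inl w) ≤ 1)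
    (hv : z (Sum.inl v) = 1) : z ∈ convexHull ℝ (gensV G v) := by
  have key : ∀ n : ℕ, ∀ z : V ⊕ ↥G.edgeSet → ℝ,
      (∀ i, 0 ≤ z i) →
      (∀ e : ↥G.edgeSet, ∀ u ∈ (e : Sym2 V), z (Sum.inr e) ≤ z (Sum.inl u)) →
      (∀ w, z (Sum.inl w) ≤ 1) → z (Sum.inl v) = 1 →
      (posVals z).card ≤ n → z ∈ convexHull ℝ (gensV G v) := by
    intro n
    induction n with
    | zero =>
      intro z h0 hle h1 hv hcard
      exfalso
      have h1mem : (1 : ℝ) ∈ posVals z := by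
        refine Finset.mem_filter.2 ⟨Finset.mem_image.2 ⟨Sum.inl v, Finset.mem_univ _, hv⟩, by norm_num⟩
      have := Finset.card_pos.2 ⟨1, h1mem⟩
      omega
    | succ n ih =>
      intro z h0 hle h1 hv hcard
      -- all coordinates are ≤ 1
      have hall1 : ∀ i, z i ≤ 1 := by
        intro i
        cases i with
        | inl w => exact h1 w
        | inr e =>
          obtain ⟨a, b, hab⟩ : ∃ a b, (e : Sym2 V) = s(a, b) := by
            obtain ⟨e', he'⟩ := e
            induction e' using Sym2.inductionOn with
            | hf a b => exact ⟨a, b, rfl⟩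
          have ha : a ∈ (e : Sym2 V) := by rw [hab]; simp
          exact le_trans (hle e a ha) (h1 a)
      have hne : (posVals z).Nonempty :=
        ⟨1, Finset.mem_filter.2 ⟨Finset.mem_image.2 ⟨Sum.inl v, Finset.mem_univ _, hv⟩, by norm_num⟩⟩
      set m := (posVals z).min' hne with hm
      have hmmem : m ∈ posVals z := (posVals z).min'_mem hne
      have hm0 : 0 < m := (Finset.mem_filter.1 hmmem).2
      have hm1 : m ≤ 1 := (posVals z).min'_le 1
        (Finset.mem_filter.2 ⟨Finset.mem_image.2 ⟨Sum.inl v, Finset.mem_univ _, hv⟩, by norm_num⟩)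
      have hminle : ∀ t ∈ posVals z, m ≤ t := fun t ht => (posVals z).min'_le t ht
      have hzmem : ∀ i, 0 < z i → z i ∈ posVals z := fun i hi =>
        Finset.mem_filter.2 ⟨Finset.mem_image.2 ⟨i, Finset.mem_univ _, rfl⟩, hi⟩
      rcases eq_or_lt_of_le hm1 with hm1' | hm1'
      · -- m = 1 : all coordinates are 0 or 1, z is itself a generator
        have h01 : ∀ i, z i = 0 ∨ z i = 1 := by
          intro i
          rcases eq_or_lt_of_le (h0 i) with h | h
          · exact Or.inl h.symm
          · right
            have := hminle _ (hzmem i h)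
            have := hall1 i
            linarith [hm1'.symm.le]
        refine subset_convexHull ℝ _ ?_
        refine ⟨{u | z (Sum.inl u) = 1},
          {e : Sym2 V | ∃ h : e ∈ G.edgeSet, z (Sum.inr ⟨e, h⟩) = 1}, hv, ?_, ?_, ?_⟩
        · rintro e ⟨h, _⟩; exact h
        · rintro e ⟨h, he1⟩ u hu
          have := hle ⟨e, h⟩ u hu
          have h1u := h1 u
          simp only [Set.mem_setOf_eq]
          linarith [he1 ▸ this]
        · funext i
          cases i with
          | inl u =>
            rw [charVec_inl]
            rcases h01 (Sum.inl u) with h | h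
            · rw [h, if_neg (by simp only [Set.mem_setOf_eq, h]; norm_num)]
            · rw [h, if_pos (show u ∈ {u | z (Sum.inl u) = 1} from h)]
          | inr e =>
            rw [charVec_inr]
            rcases h01 (Sum.inr e) with h | h
            · rw [h, if_neg]
              rintro ⟨h', he'⟩
              rw [show (⟨(e : Sym2 V), h'⟩ : ↥G.edgeSet) = e from Subtype.ext rfl] at he'
              rw [h] at he'; norm_num at he'
            · rw [h, if_pos]
              exact ⟨e.2, by rw [show (⟨(e : Sym2 V), e.2⟩ : ↥G.edgeSet) = e from Subtype.ext rfl]; exact h⟩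
      · -- m < 1 : split off a generator
        set g := charVec G {u | 0 < z (Sum.inl u)}
          {e : Sym2 V | ∃ h : e ∈ G.edgeSet, 0 < z (Sum.inr ⟨e, h⟩)} with hg
        set w : V ⊕ ↥G.edgeSet → ℝ := fun i => max (z i - m) 0 / (1 - m) with hw
        have h1m : (0:ℝ) < 1 - m := by linarith
        have hgval : ∀ i, g i = if 0 < z i then (1:ℝ) else 0 := by
          intro i
          cases i with
          | inl u => rw [hg, charVec_inl]; rfl
          | inr e =>
            rw [hg, charVec_inr]
            by_cases h : 0 < z (Sum.inr e)
            · rw [if_pos h, if_pos]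
              exact ⟨e.2, by rwa [show (⟨(e : Sym2 V), e.2⟩ : ↥G.edgeSet) = e from Subtype.ext rfl]⟩
            · rw [if_neg h, if_neg]
              rintro ⟨h', hlt⟩
              rw [show (⟨(e : Sym2 V), h'⟩ : ↥G.edgeSet) = e from Subtype.ext rfl] at hlt
              exact h hlt
        have hcomb : z = m • g + (1 - m) • w := by
          funext i
          have : (m • g + (1 - m) • w) i = m * g i + (1 - m) * w i := by simp
          rw [this, hgval i]
          have hwi : w i = max (z i - m) 0 / (1 - m) := rfl
          rcases eq_or_lt_of_le (h0 i) with h | h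
          · rw [if_neg (by rw [← h]; exact lt_irrefl _), hwi, ← h]
            rw [max_eq_right (by linarith : (0:ℝ) - m ≤ 0)]
            simp
          · rw [if_pos h, hwi]
            have hmz : m ≤ z i := hminle _ (hzmem i h)
            rw [max_eq_left (by linarith : (0:ℝ) ≤ z i - m)]
            have hcan : (1 - m) * ((z i - m) / (1 - m)) = z i - m := by field_simp
            rw [hcan]; ring
        have hgmem : g ∈ gensV G v := by
          refine ⟨_, _, ?_, ?_, ?_, rfl⟩
          · simp only [Set.mem_setOf_eq]; rw [hv]; norm_num
          · rintro e ⟨h, _⟩; exact h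
          · rintro e ⟨h, hpos⟩ u hu
            have := hle ⟨e, h⟩ u hu
            simp only [Set.mem_setOf_eq]
            linarith
        have hwmem : w ∈ convexHull ℝ (gensV G v) := by
          refine ih w ?_ ?_ ?_ ?_ ?_
          · intro i
            exact div_nonneg (le_max_right _ _) h1m.le
          · intro e u hu
            have hmax : max (z (Sum.inr e) - m) 0 ≤ max (z (Sum.inl u) - m) 0 :=
              max_le_max (by linarith [hle e u hu]) le_rfl
            exact (div_le_div_iff_of_pos_right h1m).2 hmax
          · intro u
            have hwi : w (Sum.inl u) = max (z (Sum.inl u) - m) 0 / (1 - m) := rfl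
            rw [hwi, div_le_one h1m]
            exact max_le (by linarith [h1 u]) (by linarith)
          · have hwi : w (Sum.inl v) = max (z (Sum.inl v) - m) 0 / (1 - m) := rfl
            rw [hwi, hv, max_eq_left (by linarith)]
            exact div_self (by linarith)
          · -- cardinality decreases
            have hsub : posVals w ⊆ ((posVals z).erase m).image (fun t => (t - m) / (1 - m)) := by
              intro t' ht'
              obtain ⟨ht'img, ht'pos⟩ := Finset.mem_filter.1 ht'
              obtain ⟨i, _, hi⟩ := Finset.mem_image.1 ht'img
              have hzi : m < z i := by
                by_contra hcon
                push_neg at hcon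
                have hwi0 : w i = 0 := by
                  have hwi : w i = max (z i - m) 0 / (1 - m) := rfl
                  rw [hwi, max_eq_right (by linarith)]
                  simp
                rw [← hi, hwi0] at ht'pos; exact lt_irrefl _ ht'pos
              refine Finset.mem_image.2 ⟨z i, Finset.mem_erase.2 ⟨ne_of_gt hzi, hzmem i (lt_trans hm0 hzi)⟩, ?_⟩
              rw [← hi]
              have hwi : w i = max (z i - m) 0 / (1 - m) := rfl
              rw [hwi, max_eq_left (by linarith)]
            calc (posVals w).card ≤ (((posVals z).erase m).image _).card := Finset.card_le_card hsub
              _ ≤ ((posVals z).erase m).card := Finset.card_image_le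
              _ = (posVals z).card - 1 := Finset.card_erase_of_mem hmmem
              _ ≤ n := by omega
        rw [hcomb]
        exact (convex_convexHull ℝ _) (subset_convexHull ℝ _ hgmem) hwmem hm0.le (by linarith) (by ring)
  exact key (posVals z).card z h0 hle h1 hv le_rfl



lemma sum_affine {α : Type} [Fintype α] (f g h : α → ℝ) (t : ℝ) :
    ∑ j, f j * (g j + t * h j) = (∑ j, f j * g j) + t * ∑ j, f j * h j := by
  rw [Finset.mul_sum, ← Finset.sum_add_distrib]
  exact Finset.sum_congr rfl (fun j _ => by ring)

/-- Every convex hull of a finite set admits some extended formulation. -/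
lemma exists_isEF {ι : Type} [Fintype ι] (gs : Set (ι → ℝ)) (hfin : gs.Finite) :
    ∃ m, IsExtFormulation (convexHull ℝ gs) m := by
  set s : Finset (ι → ℝ) := hfin.toFinset with hs
  refine ⟨Fintype.card ↥s, isEF_of (Q := ι ⊕ Unit) _ (fun _ _ => 0)
    (fun r j => if j = r then (-1 : ℝ) else 0) (fun _ => 0)
    (Sum.elim (fun i j => if j = i then (1:ℝ) else 0) (fun _ _ => 0))
    (Sum.elim (fun (i : ι) (w : ↥s) => -((w : ι → ℝ) i)) (fun _ _ => (1:ℝ)))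
    (Sum.elim (fun _ => 0) (fun _ => 1)) ?_⟩
  rw [← hfin.coe_toFinset, Finset.convexHull_eq]
  ext x
  simp only [Set.mem_setOf_eq]
  constructor
  · rintro ⟨w, hw0, hw1, hwc⟩
    refine ⟨fun r => w ↑r, fun r => ?_, ?_⟩
    · simp only [ite_mul, zero_mul, Finset.sum_ite_eq', Finset.mem_univ, if_pos, Finset.sum_const_zero, zero_add, neg_mul, one_mul]
      have := hw0 ↑r r.2
      linarith
    · have hcm : ∀ i, (∑ r : ↥s, w ↑r * (r : ι → ℝ) i) = x i := by
        intro i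
        rw [Finset.centerMass, hw1, inv_one, one_smul] at hwc
        conv_rhs => rw [← hwc]
        rw [Finset.sum_apply, ← Finset.sum_coe_sort s (fun y => (w y • id y : ι → ℝ) i)]
        simp
      rintro (i | u)
      · simp only [Sum.elim_inl, ite_mul, zero_mul, one_mul, Finset.sum_ite_eq',
          Finset.mem_univ, if_pos]
        have : ∑ j : ↥s, -((j : ι → ℝ) i) * w ↑j = -∑ r : ↥s, w ↑r * (r : ι → ℝ) i := by
          rw [← Finset.sum_neg_distrib]
          exact Finset.sum_congr rfl (fun j _ => by ring)
        rw [this, hcm i]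
        ring
      · simp only [Sum.elim_inr, zero_mul, Finset.sum_const_zero, zero_add, one_mul]
        rw [Finset.sum_coe_sort s w, hw1]
  · rintro ⟨y, hy1, hy2⟩
    have hy0 : ∀ r, 0 ≤ y r := by
      intro r
      have := hy1 r
      simp only [ite_mul, zero_mul, Finset.sum_ite_eq', Finset.mem_univ, if_pos,
        Finset.sum_const_zero, zero_add, neg_mul, one_mul] at this
      linarith
    have hsum1 : ∑ r : ↥s, y r = 1 := by
      have := hy2 (Sum.inr ())
      simpa using this
    have hcoord : ∀ i, x i = ∑ r : ↥s, y r * (r : ι → ℝ) i := by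
      intro i
      have := hy2 (Sum.inl i)
      simp only [Sum.elim_inl, ite_mul, zero_mul, one_mul, Finset.sum_ite_eq',
        Finset.mem_univ, if_pos] at this
      have h2 : ∑ j : ↥s, -((j : ι → ℝ) i) * y j = -∑ r : ↥s, y r * (r : ι → ℝ) i := by
        rw [← Finset.sum_neg_distrib]
        exact Finset.sum_congr rfl (fun j _ => by ring)
      rw [h2] at this
      linarith
    refine ⟨fun z => if h : z ∈ s then y ⟨z, h⟩ else 0, fun z hz => by beta_reduce; split_ifs <;> simp [hy0], ?_, ?_⟩
    · rw [← Finset.sum_coe_sort s]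
      simp only [Finset.coe_mem, dif_pos]
      simpa using hsum1
    · rw [Finset.centerMass]
      have : ∑ z ∈ s, (if h : z ∈ s then y ⟨z, h⟩ else 0) = 1 := by
        rw [← Finset.sum_coe_sort s]
        simp only [Finset.coe_mem, dif_pos]
        simpa using hsum1
      rw [this, inv_one, one_smul]
      funext i
      rw [Finset.sum_apply, ← Finset.sum_coe_sort s (fun z => ((if h : z ∈ s then y ⟨z, h⟩ else 0) • id z : ι → ℝ) i)]
      simp only [Finset.coe_mem, dif_pos, Pi.smul_apply, smul_eq_mul, id]
      exact (hcoord i).symm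

/-- Recession argument: if the projection of the system is nonempty and has
coordinates in `[0,1]`, then any homogeneous solution has zero `x`-part. -/
lemma rec_zero {ι R Y Q : Type} [Fintype ι] [Fintype R] [Fintype Y] [Fintype Q]
    {P : Set (ι → ℝ)} (A : R → ι → ℝ) (B : R → Y → ℝ) (b : R → ℝ)
    (C : Q → ι → ℝ) (D : Q → Y → ℝ) (c : Q → ℝ)
    (hP : P = {x | ∃ y : Y → ℝ, (∀ i, (∑ j, A i j * x j) + (∑ j, B i j * y j) ≤ b i) ∧
        (∀ q, (∑ j, C q j * x j) + (∑ j, D q j * y j) = c q)})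
    (hne : P.Nonempty) (hbd : ∀ z ∈ P, ∀ i, 0 ≤ z i ∧ z i ≤ 1)
    (x : ι → ℝ) (y : Y → ℝ)
    (hi : ∀ r, (∑ j, A r j * x j) + (∑ j, B r j * y j) ≤ 0)
    (he : ∀ q, (∑ j, C q j * x j) + (∑ j, D q j * y j) = 0) : x = 0 := by
  obtain ⟨x₀, hx₀⟩ := hne
  have hx₀' := hx₀
  rw [hP] at hx₀'
  obtain ⟨y₀, hiy₀, hey₀⟩ := hx₀'
  have hmem : ∀ t : ℝ, 0 ≤ t → (fun i => x₀ i + t * x i) ∈ P := by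
    intro t ht
    rw [hP]
    refine ⟨fun j => y₀ j + t * y j, fun r => ?_, fun q => ?_⟩
    · rw [sum_affine, sum_affine]
      have h1 := hiy₀ r
      have h2 := hi r
      nlinarith
    · rw [sum_affine, sum_affine]
      have h1 := hey₀ q
      have h2 := he q
      nlinarith
  funext i
  simp only [Pi.zero_apply]
  by_contra hxi
  rcases lt_or_gt_of_ne hxi with h | h
  · -- x i < 0 : large t makes coordinate negative
    have hx' : (0:ℝ) < -x i := by linarith
    have ht : (0:ℝ) ≤ 2 / (-(x i)) := le_of_lt (by positivity)
    have h1 := (hbd _ (hmem _ ht) i).1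
    have hb0 := (hbd _ hx₀ i).2
    have h2 : (2 / (-(x i))) * x i = -2 := by
      field_simp
    rw [h2] at h1
    linarith
  · have ht : (0:ℝ) ≤ 2 / x i := by positivity
    have h1 := (hbd _ (hmem _ ht) i).2
    have hb0 := (hbd _ hx₀ i).1
    have h2 : x₀ i + (2 / x i) * x i = x₀ i + 2 := by field_simp
    rw [h2] at h1
    linarith

variable {V : Type} (G : SimpleGraph V) (X : Finset V)

abbrev Idx := V ⊕ ↥G.edgeSet
abbrev RT (Rd : Type) : Type := (↥X × (↥G.edgeSet ⊕ (↥G.edgeSet × Bool ⊕ V))) ⊕ (Rd ⊕ Unit)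
abbrev YT (Yd : Type) : Type := (↥X × Idx G ⊕ ↥X) ⊕ ((Idx G ⊕ Yd) ⊕ Unit)
abbrev QT (Qd : Type) : Type := (Idx G ⊕ Unit) ⊕ (↥X ⊕ Qd)

section Mats
variable {Rd Yd Qd : Type}
variable (Ad : Rd → Idx G → ℝ) (Bd : Rd → Yd → ℝ) (bd : Rd → ℝ)
variable (Cd : Qd → Idx G → ℝ) (Dd : Qd → Yd → ℝ) (cd : Qd → ℝ)

noncomputable def ep (e : ↥G.edgeSet) : Bool → V := by
  have h : ∃ p : V × V, (e : Sym2 V) = s(p.1, p.2) := by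
    obtain ⟨e, he⟩ := e
    induction e using Sym2.inductionOn with
    | hf a b => exact ⟨(a, b), rfl⟩
  exact fun s => if s then h.choose.2 else h.choose.1

noncomputable def Bmat : RT G X Rd → YT G X Yd → ℝ := fun r =>
  match r with
  | .inl (v, .inl e) => fun j => if j = .inl (.inl (v, .inr e)) then (-1:ℝ) else 0
  | .inl (v, .inr (.inl (e, s))) => fun j =>
      (if j = .inl (.inl (v, .inr e)) then (1:ℝ) else 0) +
      (if j = .inl (.inl (v, .inl (ep G e s))) then (-1:ℝ) else 0)
  | .inl (v, .inr (.inr w)) => fun j =>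
      (if j = .inl (.inl (v, .inl w)) then (1:ℝ) else 0) +
      (if j = .inl (.inr v) then (-1:ℝ) else 0)
  | .inr (.inl r) => fun j => match j with
      | .inr (.inl (.inl i)) => Ad r i
      | .inr (.inl (.inr jd)) => Bd r jd
      | .inr (.inr _) => -bd r
      | _ => 0
  | .inr (.inr _) => fun j => if j = .inr (.inr ()) then (-1:ℝ) else 0

noncomputable def Cmat : QT G X Qd → Idx G → ℝ := fun q =>
  match q with
  | .inl (.inl i) => fun j => if j = i then (1:ℝ) else 0
  | _ => fun _ => 0

noncomputable def Dmat : QT G X Qd → YT G X Yd → ℝ := fun q =>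
  match q with
  | .inl (.inl i) => fun j => match j with
      | .inl (.inl (v, i')) => if i' = i then (-1:ℝ) else 0
      | .inr (.inl (.inl i')) => if i' = i then (-1:ℝ) else 0
      | _ => 0
  | .inl (.inr _) => fun j => match j with
      | .inl (.inr _) => (1:ℝ)
      | .inr (.inr _) => (1:ℝ)
      | _ => 0
  | .inr (.inl v) => fun j =>
      (if j = .inl (.inl (v, .inl ↑v)) then (1:ℝ) else 0) +
      (if j = .inl (.inr v) then (-1:ℝ) else 0)
  | .inr (.inr qd) => fun j => match j with
      | .inr (.inl (.inl i)) => Cd qd i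
      | .inr (.inl (.inr jd)) => Dd qd jd
      | .inr (.inr _) => -cd qd
      | _ => 0

variable {G X}
variable [Fintype V] [DecidableEq V] [DecidableRel G.Adj] [Fintype Yd] [Fintype Rd] [Fintype Qd]

lemma sumB_e (y : YT G X Yd → ℝ) (v : ↥X) (e : ↥G.edgeSet) :
    ∑ j, Bmat G X Ad Bd bd (.inl (v, .inl e)) j * y j = -y (.inl (.inl (v, .inr e))) := by
  simp [Bmat, ite_mul, Finset.sum_ite_eq']

lemma sumB_ue (y : YT G X Yd → ℝ) (v : ↥X) (e : ↥G.edgeSet) (s : Bool) :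
    ∑ j, Bmat G X Ad Bd bd (.inl (v, .inr (.inl (e, s)))) j * y j
      = y (.inl (.inl (v, .inr e))) - y (.inl (.inl (v, .inl (ep G e s)))) := by
  simp [Bmat, ite_mul, add_mul, Finset.sum_add_distrib, Finset.sum_ite_eq']
  ring

lemma sumB_w (y : YT G X Yd → ℝ) (v : ↥X) (w : V) :
    ∑ j, Bmat G X Ad Bd bd (.inl (v, .inr (.inr w))) j * y j
      = y (.inl (.inl (v, .inl w))) - y (.inl (.inr v)) := by
  simp [Bmat, ite_mul, add_mul, Finset.sum_add_distrib, Finset.sum_ite_eq']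
  ring

lemma sumB_del (y : YT G X Yd → ℝ) (r : Rd) :
    ∑ j, Bmat G X Ad Bd bd (.inr (.inl r)) j * y j
      = (∑ i, Ad r i * y (.inr (.inl (.inl i)))) + (∑ jd, Bd r jd * y (.inr (.inl (.inr jd))))
        - bd r * y (.inr (.inr ())) := by
  simp [Bmat, Fintype.sum_sum_type, Fintype.sum_prod_type]
  ring

lemma sumB_ld (y : YT G X Yd → ℝ) (u : Unit) :
    ∑ j, Bmat G X Ad Bd bd (.inr (.inr u)) j * y j = -y (.inr (.inr ())) := by
  simp [Bmat, ite_mul, Finset.sum_ite_eq']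

lemma sumC_glob (x : Idx G → ℝ) (i : Idx G) :
    ∑ j, Cmat G X (Qd := Qd) (.inl (.inl i)) j * x j = x i := by
  simp [Cmat, ite_mul, Finset.sum_ite_eq']

lemma sumC_other (x : Idx G → ℝ) (q : QT G X Qd) (h : ∀ i, q ≠ .inl (.inl i)) :
    ∑ j, Cmat G X q j * x j = 0 := by
  match q with
  | .inl (.inl i) => exact absurd rfl (h i)
  | .inl (.inr u) => simp [Cmat]
  | .inr (.inl v) => simp [Cmat]
  | .inr (.inr qd) => simp [Cmat]

lemma sumD_glob (y : YT G X Yd → ℝ) (i : Idx G) :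
    ∑ j, Dmat G X Cd Dd cd (.inl (.inl i)) j * y j
      = -(∑ v : ↥X, y (.inl (.inl (v, i)))) - y (.inr (.inl (.inl i))) := by
  simp [Dmat, Fintype.sum_sum_type, Fintype.sum_prod_type, ite_mul, Finset.sum_ite_eq']
  ring

lemma sumD_one (y : YT G X Yd → ℝ) (u : Unit) :
    ∑ j, Dmat G X Cd Dd cd (.inl (.inr u)) j * y j
      = (∑ v : ↥X, y (.inl (.inr v))) + y (.inr (.inr ())) := by
  simp [Dmat, Fintype.sum_sum_type, Fintype.sum_prod_type]

lemma sumD_lam (y : YT G X Yd → ℝ) (v : ↥X) :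
    ∑ j, Dmat G X Cd Dd cd (.inr (.inl v)) j * y j
      = y (.inl (.inl (v, .inl ↑v))) - y (.inl (.inr v)) := by
  simp [Dmat, ite_mul, add_mul, Finset.sum_add_distrib, Finset.sum_ite_eq']
  ring

lemma sumD_del (y : YT G X Yd → ℝ) (qd : Qd) :
    ∑ j, Dmat G X Cd Dd cd (.inr (.inr qd)) j * y j
      = (∑ i, Cd qd i * y (.inr (.inl (.inl i)))) + (∑ jd, Dd qd jd * y (.inr (.inl (.inr jd))))
        - cd qd * y (.inr (.inr ())) := by
  simp [Dmat, Fintype.sum_sum_type, Fintype.sum_prod_type]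
  ring

end Mats

variable {G} in
lemma ep_spec (e : ↥G.edgeSet) : (e : Sym2 V) = s(ep G e false, ep G e true) := by
  have h : ∃ p : V × V, (e : Sym2 V) = s(p.1, p.2) := by
    obtain ⟨e, he⟩ := e
    induction e using Sym2.inductionOn with
    | hf a b => exact ⟨(a, b), rfl⟩
  simpa [ep] using h.choose_spec

variable {G} in
lemma ep_mem (e : ↥G.edgeSet) (s : Bool) : ep G e s ∈ (e : Sym2 V) := by
  rw [ep_spec e]
  cases s <;> simp

variable {G} in
lemma eq_ep_of_mem {e : ↥G.edgeSet} {u : V} (hu : u ∈ (e : Sym2 V)) :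
    u = ep G e false ∨ u = ep G e true := by
  rw [ep_spec e] at hu
  simpa using hu

-- hull decomposition lemmas
lemma nesubp_eq_hull_union :
    nesubp G = convexHull ℝ ((⋃ v ∈ X, gensV G v) ∪ gensDel G (↑X : Set V)) := by
  rw [show nesubp G = convexHull ℝ (gensNe G) from rfl, gensNe_eq_union X]

lemma nesubpDel_eq_hull :
    nesubpDel G (↑X : Set V) = convexHull ℝ (gensDel G (↑X : Set V)) := rfl

variable {G} in
lemma mem_gensV_iff {z : V ⊕ ↥G.edgeSet → ℝ} {v : V} :
    z ∈ gensV G v ↔ ∃ (S : Set V) (F : Set (Sym2 V)), v ∈ S ∧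
      F ⊆ G.edgeSet ∧ (∀ e ∈ F, ∀ w ∈ e, w ∈ S) ∧ z = charVec G S F := Iff.rfl

lemma sum_combo {α : Type} [Fintype α] (f y1 y2 : α → ℝ) (a b : ℝ) :
    ∑ j, f j * (a * y1 j + b * y2 j) = a * (∑ j, f j * y1 j) + b * (∑ j, f j * y2 j) := by
  rw [Finset.mul_sum, Finset.mul_sum, ← Finset.sum_add_distrib]
  exact Finset.sum_congr rfl fun j _ => by ring

noncomputable def cvec (G : SimpleGraph V) (X : Finset V) (Qd : Type) : QT G X Qd → ℝ :=
  fun q => match q with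
  | .inl (.inr _) => (1:ℝ)
  | _ => 0

variable [Fintype V] [DecidableEq V] [DecidableRel G.Adj]

lemma main_construction (hX : X.Nonempty)
    (hdeg : ∀ w : V, ∃ u, G.Adj w u)
    {Rd Yd Qd : Type} [Fintype Rd] [Fintype Yd] [Fintype Qd]
    (Ad : Rd → Idx G → ℝ) (Bd : Rd → Yd → ℝ) (bd : Rd → ℝ)
    (Cd : Qd → Idx G → ℝ) (Dd : Qd → Yd → ℝ) (cd : Qd → ℝ)
    (hproj : nesubpDel G (↑X : Set V) = {x | ∃ y : Yd → ℝ,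
        (∀ r, (∑ j, Ad r j * x j) + (∑ j, Bd r j * y j) ≤ bd r) ∧
        (∀ q, (∑ j, Cd q j * x j) + (∑ j, Dd q j * y j) = cd q)})
    (hrec : ∀ (x : Idx G → ℝ) (y : Yd → ℝ),
        (∀ r, (∑ j, Ad r j * x j) + (∑ j, Bd r j * y j) ≤ 0) →
        (∀ q, (∑ j, Cd q j * x j) + (∑ j, Dd q j * y j) = 0) → x = 0) :
    IsExtFormulation (nesubp G)
      (X.card * (3 * G.edgeFinset.card + Fintype.card V) + (Fintype.card Rd + 1)) := by
  have hE : G.edgeFinset.card = Fintype.card ↥G.edgeSet := Set.toFinset_card _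
  have hcard : X.card * (3 * G.edgeFinset.card + Fintype.card V) + (Fintype.card Rd + 1)
      = Fintype.card (RT G X Rd) := by
    simp only [RT, Fintype.card_sum, Fintype.card_prod, Fintype.card_coe, Fintype.card_bool,
      Fintype.card_unit, hE]
    ring
  rw [hcard]
  apply isEF_of (nesubp G) (fun _ _ => (0:ℝ)) (Bmat G X Ad Bd bd) (fun _ => (0:ℝ))
    (Cmat G X) (Dmat G X Cd Dd cd) (cvec G X Qd)
  rw [nesubp_eq_hull_union G X]
  apply Set.Subset.antisymm
  · -- hull ⊆ feasible region
    apply convexHull_min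
    · -- generators are feasible
      rintro z (hz | hz)
      · -- generators of a piece v₀ ∈ X
        simp only [Set.mem_iUnion] at hz
        obtain ⟨v₀, hv₀X, hzv⟩ := hz
        rw [mem_gensV_iff] at hzv
        obtain ⟨S, F, hvS, hF, hFS, rfl⟩ := hzv
        set v' : ↥X := ⟨v₀, hv₀X⟩ with hv'
        refine ⟨fun j => match j with
          | .inl (.inl (v, i)) => if v = v' then charVec G S F i else 0
          | .inl (.inr v) => if v = v' then 1 else 0
          | _ => 0, ?_, ?_⟩
        · rintro (⟨v, (e | (⟨e, s⟩ | w))⟩ | (rd | u)) <;>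
            simp only [zero_mul, Finset.sum_const_zero, zero_add]
          · rw [sumB_e]
            by_cases h : v = v'
            · simp only [h, if_pos]
              rw [charVec_inr]
              split <;> norm_num
            · simp [h]
          · rw [sumB_ue]
            by_cases h : v = v'
            · simp only [h, if_pos]
              rw [charVec_inr, charVec_inl]
              by_cases hF' : (e : Sym2 V) ∈ F
              · rw [if_pos hF', if_pos (hFS _ hF' _ (ep_mem e s))]
                norm_num
              · rw [if_neg hF']
                split <;> norm_num
            · simp [h]
          · rw [sumB_w]
            by_cases h : v = v'
            · simp only [h, if_pos]
              rw [charVec_inl]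
              split <;> norm_num
            · simp [h]
          · rw [sumB_del]
            simp
          · rw [sumB_ld]
            simp
        · rintro ((i | u) | (vq | qd))
          · rw [sumC_glob, sumD_glob]
            simp [cvec, Finset.sum_ite_eq']
          · rw [sumC_other _ _ (fun i => by simp), sumD_one]
            simp [cvec, Finset.sum_ite_eq']
          · rw [sumC_other _ _ (fun i => by simp), sumD_lam]
            by_cases h : vq = v'
            · simp only [h, if_pos]
              rw [charVec_inl, if_pos (show (↑v' : V) ∈ S from hvS)]
              simp [cvec]
            · simp [h, cvec]
          · rw [sumC_other _ _ (fun i => by simp), sumD_del]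
            simp [cvec]
      · -- generators of the deleted part
        have hzDel : z ∈ nesubpDel G (↑X : Set V) := by
          rw [nesubpDel_eq_hull G X]
          exact subset_convexHull ℝ _ hz
        rw [hproj] at hzDel
        obtain ⟨y₀, hA, hC⟩ := hzDel
        refine ⟨fun j => match j with
          | .inr (.inl (.inl i)) => z i
          | .inr (.inl (.inr jd)) => y₀ jd
          | .inr (.inr _) => 1
          | _ => 0, ?_, ?_⟩
        · rintro (⟨v, (e | (⟨e, s⟩ | w))⟩ | (rd | u)) <;>
            simp only [zero_mul, Finset.sum_const_zero, zero_add]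
          · rw [sumB_e]; simp
          · rw [sumB_ue]; simp
          · rw [sumB_w]; simp
          · rw [sumB_del]
            have := hA rd
            simp only [mul_one]
            linarith
          · rw [sumB_ld]; simp
        · rintro ((i | u) | (vq | qd))
          · rw [sumC_glob, sumD_glob]
            simp [cvec]
          · rw [sumC_other _ _ (fun i => by simp), sumD_one]
            simp [cvec]
          · rw [sumC_other _ _ (fun i => by simp), sumD_lam]
            simp [cvec]
          · rw [sumC_other _ _ (fun i => by simp), sumD_del]
            have := hC qd
            simp only [cvec, mul_one]
            linarith
    · -- convexity of the feasible region
      intro x1 hx1 x2 hx2 a b ha hb hab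
      obtain ⟨y1, hi1, he1⟩ := hx1
      obtain ⟨y2, hi2, he2⟩ := hx2
      refine ⟨fun j => a * y1 j + b * y2 j, fun r => ?_, fun q => ?_⟩
      · have hxc : ∀ j, (a • x1 + b • x2) j = a * x1 j + b * x2 j := by intro j; simp
        simp only [hxc, sum_combo]
        have h1 := hi1 r
        have h2 := hi2 r
        linarith [mul_le_mul_of_nonneg_left h1 ha, mul_le_mul_of_nonneg_left h2 hb]
      · have hxc : ∀ j, (a • x1 + b • x2) j = a * x1 j + b * x2 j := by intro j; simp
        simp only [hxc, sum_combo]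
        have h1 := he1 q
        have h2 := he2 q
        linear_combination a * h1 + b * h2 + cvec G X Qd q * hab
  · -- feasible region ⊆ hull
    rintro x ⟨y, hIneq, hEq⟩
    have hIneq' : ∀ r, (∑ j, Bmat G X Ad Bd bd r j * y j) ≤ 0 := by
      intro r; have := hIneq r; simpa using this
    have h1 : ∀ (v : ↥X) (e : ↥G.edgeSet), 0 ≤ y (.inl (.inl (v, .inr e))) := by
      intro v e
      have := hIneq' (.inl (v, .inl e))
      rw [sumB_e] at this
      linarith
    have h2 : ∀ (v : ↥X) (e : ↥G.edgeSet) (s : Bool),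
        y (.inl (.inl (v, .inr e))) ≤ y (.inl (.inl (v, .inl (ep G e s)))) := by
      intro v e s
      have := hIneq' (.inl (v, .inr (.inl (e, s))))
      rw [sumB_ue] at this
      linarith
    have h2' : ∀ (v : ↥X) (e : ↥G.edgeSet), ∀ u ∈ (e : Sym2 V),
        y (.inl (.inl (v, .inr e))) ≤ y (.inl (.inl (v, .inl u))) := by
      intro v e u hu
      rcases eq_ep_of_mem hu with h | h
      · rw [h]; exact h2 v e false
      · rw [h]; exact h2 v e true
    have h3 : ∀ (v : ↥X) (w : V), y (.inl (.inl (v, .inl w))) ≤ y (.inl (.inr v)) := by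
      intro v w
      have := hIneq' (.inl (v, .inr (.inr w)))
      rw [sumB_w] at this
      linarith
    have h4 : ∀ rd : Rd, (∑ i, Ad rd i * y (.inr (.inl (.inl i)))) +
        (∑ jd, Bd rd jd * y (.inr (.inl (.inr jd)))) ≤ bd rd * y (.inr (.inr ())) := by
      intro rd
      have := hIneq' (.inr (.inl rd))
      rw [sumB_del] at this
      linarith
    have h5 : 0 ≤ y (.inr (.inr ())) := by
      have := hIneq' (.inr (.inr ()))
      rw [sumB_ld] at this
      linarith
    have h6 : ∀ i, x i = (∑ v : ↥X, y (.inl (.inl (v, i)))) + y (.inr (.inl (.inl i))) := by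
      intro i
      have := hEq (.inl (.inl i))
      rw [sumC_glob, sumD_glob] at this
      simp only [cvec] at this
      linarith
    have h7 : (∑ v : ↥X, y (.inl (.inr v))) + y (.inr (.inr ())) = 1 := by
      have := hEq (.inl (.inr ()))
      rw [sumC_other _ _ (fun i => by simp), sumD_one] at this
      simpa [cvec] using this
    have h8 : ∀ v : ↥X, y (.inl (.inl (v, .inl ↑v))) = y (.inl (.inr v)) := by
      intro v
      have := hEq (.inr (.inl v))
      rw [sumC_other _ _ (fun i => by simp), sumD_lam] at this
      simp only [cvec] at this
      linarith
    have h9 : ∀ qd : Qd, (∑ i, Cd qd i * y (.inr (.inl (.inl i)))) +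
        (∑ jd, Dd qd jd * y (.inr (.inl (.inr jd)))) = cd qd * y (.inr (.inr ())) := by
      intro qd
      have := hEq (.inr (.inr qd))
      rw [sumC_other _ _ (fun i => by simp), sumD_del] at this
      simp only [cvec] at this
      linarith
    have hvc0 : ∀ (v : ↥X) (w : V), 0 ≤ y (.inl (.inl (v, .inl w))) := by
      intro v w
      obtain ⟨u, hu⟩ := hdeg w
      have he : s(w, u) ∈ G.edgeSet := hu
      have hwmem : w ∈ ((⟨s(w, u), he⟩ : ↥G.edgeSet) : Sym2 V) := by
        exact Sym2.mem_mk_left w u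
      exact le_trans (h1 v _) (h2' v _ _ hwmem)
    have hcopy0 : ∀ (v : ↥X) (i : Idx G), 0 ≤ y (.inl (.inl (v, i))) := by
      intro v i
      cases i with
      | inl w => exact hvc0 v w
      | inr e => exact h1 v e
    have hlam0 : ∀ v : ↥X, 0 ≤ y (.inl (.inr v)) := fun v => (h8 v) ▸ hvc0 v ↑v
    have hpull : ∀ (α : Type) [Fintype α], ∀ (f g : α → ℝ) (c : ℝ),
        (∑ j, f j * (c * g j)) = c * ∑ j, f j * g j := by
      intro α _ f g c
      rw [Finset.mul_sum]
      exact Finset.sum_congr rfl fun j _ => by ring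
    -- weights and pieces
    set wgt : ↥X ⊕ Unit → ℝ :=
      Sum.elim (fun v => y (.inl (.inr v))) (fun _ => y (.inr (.inr ()))) with hwgt
    set vec : ↥X ⊕ Unit → (Idx G → ℝ) :=
      Sum.elim (fun v => fun i => y (.inl (.inl (v, i))))
        (fun _ => fun i => y (.inr (.inl (.inl i)))) with hvec
    have hw0 : ∀ t, 0 ≤ wgt t := by
      rintro (v | u)
      · simpa [hwgt] using hlam0 v
      · simpa [hwgt] using h5
    have hvec0 : ∀ t, wgt t = 0 → vec t = 0 := by
      rintro (v | u) h
      · simp only [hwgt, Sum.elim_inl] at h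
        funext i
        simp only [hvec, Sum.elim_inl, Pi.zero_apply]
        cases i with
        | inl w => exact le_antisymm (h ▸ h3 v w) (hvc0 v w)
        | inr e => exact le_antisymm (h ▸ le_trans (h2 v e false) (le_trans (h3 v _) le_rfl)) (h1 v e)
      · simp only [hwgt, Sum.elim_inr] at h
        have hx0 := hrec (fun i => y (.inr (.inl (.inl i)))) (fun jd => y (.inr (.inl (.inr jd))))
          (fun r => by have := h4 r; rw [h, mul_zero] at this; simpa using this)
          (fun q => by have := h9 q; rw [h, mul_zero] at this; simpa using this)
        funext i
        simp only [hvec, Sum.elim_inr, Pi.zero_apply]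
        exact congrFun hx0 i
    have hmem : ∀ t, 0 < wgt t →
        (wgt t)⁻¹ • vec t ∈ convexHull ℝ ((⋃ v ∈ X, gensV G (↑v : V)) ∪ gensDel G (↑X : Set V)) := by
      rintro (v | u) hpos
      · simp only [hwgt, Sum.elim_inl] at hpos
        have hsub : gensV G (↑v : V) ⊆ (⋃ v' ∈ X, gensV G (↑v' : V)) ∪ gensDel G (↑X : Set V) := by
          intro z hz
          left
          have : ∃ v' ∈ X, z ∈ gensV G v' := ⟨↑v, v.2, hz⟩
          simpa [Set.mem_iUnion] using this
        apply convexHull_mono hsub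
        apply mem_hull_gensV (↑v : V)
        · intro i
          simp only [hwgt, hvec, Sum.elim_inl, Pi.smul_apply, smul_eq_mul]
          exact mul_nonneg (inv_nonneg.2 hpos.le) (hcopy0 v i)
        · intro e u hu
          simp only [hwgt, hvec, Sum.elim_inl, Pi.smul_apply, smul_eq_mul]
          exact mul_le_mul_of_nonneg_left (h2' v e u hu) (inv_nonneg.2 hpos.le)
        · intro w
          simp only [hwgt, hvec, Sum.elim_inl, Pi.smul_apply, smul_eq_mul]
          calc (y (.inl (.inr v)))⁻¹ * y (.inl (.inl (v, .inl w)))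
              ≤ (y (.inl (.inr v)))⁻¹ * y (.inl (.inr v)) :=
                mul_le_mul_of_nonneg_left (h3 v w) (inv_nonneg.2 hpos.le)
            _ = 1 := inv_mul_cancel₀ (ne_of_gt hpos)
        · simp only [hwgt, hvec, Sum.elim_inl, Pi.smul_apply, smul_eq_mul]
          rw [h8 v]
          exact inv_mul_cancel₀ (ne_of_gt hpos)
      · simp only [hwgt, Sum.elim_inr] at hpos
        have hxd : (wgt (Sum.inr u))⁻¹ • vec (Sum.inr u) ∈ nesubpDel G (↑X : Set V) := by
          rw [hproj]
          refine ⟨fun jd => (y (.inr (.inr ())))⁻¹ * y (.inr (.inl (.inr jd))), fun r => ?_, fun q => ?_⟩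
          · simp only [hwgt, hvec, Sum.elim_inr, Pi.smul_apply, smul_eq_mul]
            rw [hpull, hpull, ← mul_add]
            calc (y (.inr (.inr ())))⁻¹ * ((∑ i, Ad r i * y (.inr (.inl (.inl i)))) +
                  (∑ jd, Bd r jd * y (.inr (.inl (.inr jd)))))
                ≤ (y (.inr (.inr ())))⁻¹ * (bd r * y (.inr (.inr ()))) :=
                  mul_le_mul_of_nonneg_left (h4 r) (inv_nonneg.2 hpos.le)
              _ = bd r := by
                  rw [mul_comm (bd r), ← mul_assoc, inv_mul_cancel₀ (ne_of_gt hpos), one_mul]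
          · simp only [hwgt, hvec, Sum.elim_inr, Pi.smul_apply, smul_eq_mul]
            rw [hpull, hpull, ← mul_add, h9 q]
            rw [mul_comm (cd q), ← mul_assoc, inv_mul_cancel₀ (ne_of_gt hpos), one_mul]
        rw [nesubpDel_eq_hull G X] at hxd
        exact convexHull_mono Set.subset_union_right hxd
    have hxsum : x = ∑ t ∈ Finset.univ.filter (fun t => wgt t ≠ 0),
        wgt t • ((wgt t)⁻¹ • vec t) := by
      have hc : ∀ t ∈ Finset.univ.filter (fun t => wgt t ≠ 0),
          wgt t • ((wgt t)⁻¹ • vec t) = vec t := by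
        intro t ht
        rw [smul_inv_smul₀ (Finset.mem_filter.1 ht).2]
      rw [Finset.sum_congr rfl hc]
      rw [Finset.sum_subset (Finset.filter_subset _ Finset.univ)
        (fun t _ ht => hvec0 t (by simpa using ht))]
      funext i
      have happ : (∑ t : ↥X ⊕ Unit, vec t) i = ∑ t : ↥X ⊕ Unit, vec t i := by
        simp [Finset.sum_apply]
      rw [happ, Fintype.sum_sum_type, h6 i]
      simp [hvec]
    rw [hxsum]
    refine (convex_convexHull ℝ _).sum_mem (fun t _ => hw0 t) ?_ (fun t ht => ?_)
    · rw [Finset.sum_filter_ne_zero]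
      simp only [hwgt, Fintype.sum_sum_type]
      simpa using h7
    · have hne : wgt t ≠ 0 := (Finset.mem_filter.1 ht).2
      exact hmem t (lt_of_le_of_ne (hw0 t) (Ne.symm hne))

end XCAux

open XCAux in
/-- Let `G = (V, E)` be a finite connected simple graph and `X ⊆ V` a set of vertices.
Then `xc(NESUBP(G)) ≤ xc(NESUBP(G−X)) + |X|·(3|E| + |V| + 1)`. -/
theorem xc_nesubp_le_xc_nesubpDel_add {V : Type} [Fintype V] [DecidableEq V]
    (G : SimpleGraph V) [DecidableRel G.Adj] (hG : G.Connected) (X : Finset V) :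
    xc (nesubp G) ≤
      (if X = Finset.univ then 0 else xc (nesubpDel G (↑X : Set V))) +
        X.card * (3 * G.edgeFinset.card + Fintype.card V + 1) := by
  classical
  haveI hVne : Nonempty V := hG.nonempty
  have hdegOf : 1 < Fintype.card V → ∀ w : V, ∃ u, G.Adj w u := by
    intro hcard2 w
    obtain ⟨u, hu⟩ := Fintype.exists_ne_of_one_lt_card hcard2 w
    obtain ⟨p⟩ := hG.preconnected w u
    cases p with
    | nil => exact absurd rfl hu
    | cons h q => exact ⟨_, h⟩
  by_cases hX0 : X = ∅
  · subst hX0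
    rw [if_neg (by
      intro h
      have h2 := Finset.univ_nonempty (α := V)
      rw [← h] at h2
      simp at h2)]
    have hdel : nesubpDel G ((∅ : Finset V) : Set V) = nesubp G := by
      unfold nesubpDel nesubp
      congr 1
      ext z
      constructor
      · rintro ⟨S, F, hS, _, hF, hFS, rfl⟩; exact ⟨S, F, hS, hF, hFS, rfl⟩
      · rintro ⟨S, F, hS, hF, hFS, rfl⟩
        exact ⟨S, F, hS, by simp, hF, hFS, rfl⟩
    rw [hdel]
    exact Nat.le_add_right _ _
  · have hX : X.Nonempty := Finset.nonempty_iff_ne_empty.2 hX0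
    have hXpos : 1 ≤ X.card := Finset.card_pos.2 hX
    by_cases hXuniv : X = Finset.univ
    · rw [if_pos hXuniv, zero_add]
      by_cases hV1 : Fintype.card V = 1
      · -- singleton graph: `nesubp G` is a single point
        haveI hsub : Subsingleton V := Fintype.card_le_one_iff_subsingleton.1 (le_of_eq hV1)
        haveI hEempty : IsEmpty ↥G.edgeSet := by
          constructor
          rintro ⟨e, he⟩
          induction e using Sym2.inductionOn with
          | hf a b => exact G.ne_of_adj he (Subsingleton.elim a b)
        have hpt : nesubp G = {charVec G Set.univ ∅} := by
          unfold nesubp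
          have hgens : {z | ∃ (S : Set V) (F : Set (Sym2 V)), S.Nonempty ∧
              F ⊆ G.edgeSet ∧ (∀ e ∈ F, ∀ w ∈ e, w ∈ S) ∧ z = charVec G S F}
              = {charVec G Set.univ ∅} := by
            ext z
            constructor
            · rintro ⟨S, F, hS, hF, hFS, rfl⟩
              have : charVec G S F = charVec G Set.univ ∅ := by
                funext i
                cases i with
                | inl w =>
                  rw [charVec_inl, charVec_inl]
                  obtain ⟨s₀, hs₀⟩ := hS
                  rw [if_pos (show w ∈ S from (Subsingleton.elim s₀ w) ▸ hs₀),
                    if_pos (Set.mem_univ w)]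
                | inr e => exact (hEempty.false e).elim
              simp [this]
            · rintro rfl
              exact ⟨Set.univ, ∅, Set.univ_nonempty, Set.empty_subset _,
                fun e he => absurd he (Set.notMem_empty e), rfl⟩
          rw [hgens, convexHull_singleton]
        have hEF : IsExtFormulation (nesubp G) 0 := by
          have h := isEF_of (R := Fin 0) (Y := Fin 0) (Q := V ⊕ ↥G.edgeSet) (nesubp G)
            (fun _ _ => 0) (fun _ _ => 0) (fun _ => 0)
            (fun q j => if j = q then 1 else 0) (fun _ _ => 0)
            (fun q => charVec G Set.univ ∅ q) ?_
          · simpa using h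
          · rw [hpt]
            ext x
            simp only [Set.mem_singleton_iff, Set.mem_setOf_eq]
            constructor
            · rintro rfl
              refine ⟨Fin.elim0, fun r => r.elim0, fun q => ?_⟩
              simp [ite_mul, Finset.sum_ite_eq']
            · rintro ⟨y, _, hq⟩
              funext q
              have h2 := hq q
              simp only [ite_mul, zero_mul, one_mul, Finset.sum_ite_eq', Finset.mem_univ,
                if_pos, Finset.univ_eq_empty, Finset.sum_empty, add_zero] at h2
              exact h2
        exact le_trans (Nat.sInf_le hEF) (Nat.zero_le _)
      · -- at least two vertices
        have hdeg : ∀ w : V, ∃ u, G.Adj w u := by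
          apply hdegOf
          have := Fintype.card_pos (α := V)
          omega
        have hdelEmpty : nesubpDel G (↑X : Set V) = ∅ := by
          rw [nesubpDel_eq_hull G X]
          have : gensDel G (↑X : Set V) = ∅ := by
            ext z
            simp only [Set.mem_empty_iff_false, iff_false]
            rintro ⟨S, F, hS, hdisj, _⟩
            rw [hXuniv] at hdisj
            simp only [Finset.coe_univ, Set.disjoint_univ] at hdisj
            exact hS.ne_empty hdisj
          rw [this, convexHull_empty]
        have hproj : nesubpDel G (↑X : Set V) = {x : V ⊕ ↥G.edgeSet → ℝ | ∃ y : Fin 0 → ℝ,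
            (∀ r : Fin 0, (∑ j, (fun (_ : Fin 0) (_ : Idx G) => (0:ℝ)) r j * x j) +
              (∑ j, (fun (_ : Fin 0) (_ : Fin 0) => (0:ℝ)) r j * y j) ≤ (fun _ => (0:ℝ)) r) ∧
            (∀ q : (V ⊕ ↥G.edgeSet) ⊕ Unit,
              (∑ j, (Sum.elim (fun (i : Idx G) (j : Idx G) => if j = i then (1:ℝ) else 0)
                  (fun _ _ => 0) q) j * x j) +
              (∑ j, (fun _ (_ : Fin 0) => (0:ℝ)) q j * y j)
                = Sum.elim (fun _ => (0:ℝ)) (fun _ => (1:ℝ)) q)} := by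
          rw [hdelEmpty]
          ext x
          simp only [Set.mem_empty_iff_false, Set.mem_setOf_eq, false_iff]
          rintro ⟨y, _, hq⟩
          have h2 := hq (Sum.inr ())
          simpa using h2
        have hrec : ∀ (x : Idx G → ℝ) (y : Fin 0 → ℝ),
            (∀ r : Fin 0, (∑ j, (fun (_ : Fin 0) (_ : Idx G) => (0:ℝ)) r j * x j) +
              (∑ j, (fun (_ : Fin 0) (_ : Fin 0) => (0:ℝ)) r j * y j) ≤ 0) →
            (∀ q : (V ⊕ ↥G.edgeSet) ⊕ Unit,
              (∑ j, (Sum.elim (fun (i : Idx G) (j : Idx G) => if j = i then (1:ℝ) else 0)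
                  (fun _ _ => 0) q) j * x j) +
              (∑ j, (fun _ (_ : Fin 0) => (0:ℝ)) q j * y j) = 0) → x = 0 := by
          intro x y _ he
          funext i
          have h2 := he (Sum.inl i)
          simpa [ite_mul, Finset.sum_ite_eq'] using h2
        have hEF := main_construction G X hX hdeg _ _ _ _ _ _ hproj hrec
        refine le_trans (Nat.sInf_le hEF) ?_
        simp only [Fintype.card_fin]
        have hms : X.card * (3 * G.edgeFinset.card + Fintype.card V + 1)
            = X.card * (3 * G.edgeFinset.card + Fintype.card V) + X.card := Nat.mul_succ _ _
        rw [hms]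
        omega
    · -- X ≠ univ : use a minimum extended formulation of `nesubpDel`
      rw [if_neg hXuniv]
      obtain ⟨u0, hu0⟩ : ∃ u, u ∉ X := by
        by_contra hcon
        push_neg at hcon
        exact hXuniv (Finset.eq_univ_iff_forall.2 hcon)
      have hdeg : ∀ w : V, ∃ u, G.Adj w u := by
        apply hdegOf
        obtain ⟨v0, hv0⟩ := hX
        exact Fintype.one_lt_card_iff.2 ⟨v0, u0, fun h => hu0 (h ▸ hv0)⟩
      have hfin : (gensDel G (↑X : Set V)).Finite := by
        apply Set.Finite.subset
          (Set.finite_range (fun p : Set V × Set (Sym2 V) => charVec G p.1 p.2))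
        rintro z ⟨S, F, _, _, _, _, rfl⟩
        exact ⟨(S, F), rfl⟩
      have hEFex : {m | IsExtFormulation (nesubpDel G (↑X : Set V)) m}.Nonempty := by
        obtain ⟨m, hm⟩ := exists_isEF _ hfin
        exact ⟨m, by rw [nesubpDel_eq_hull G X]; exact hm⟩
      have hmin : IsExtFormulation (nesubpDel G (↑X : Set V))
          (xc (nesubpDel G (↑X : Set V))) := Nat.sInf_mem hEFex
      obtain ⟨k, p, A, B, b, C, D, c, hproj0⟩ := hmin
      have hproj : nesubpDel G (↑X : Set V) = {x | ∃ y : Fin k → ℝ,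
          (∀ r, (∑ j, A r j * x j) + (∑ j, B r j * y j) ≤ b r) ∧
          (∀ q, (∑ j, C q j * x j) + (∑ j, D q j * y j) = c q)} := by
        conv_lhs => rw [hproj0]
        ext x
        simp [Matrix.mulVec, dotProduct]
      have hne : (nesubpDel G (↑X : Set V)).Nonempty := by
        refine ⟨charVec G {u0} ∅, ?_⟩
        rw [nesubpDel_eq_hull G X]
        apply subset_convexHull
        exact ⟨{u0}, ∅, ⟨u0, rfl⟩, Set.disjoint_singleton_left.2 (by simpa using hu0),
          Set.empty_subset _, fun e he => absurd he (Set.notMem_empty e), rfl⟩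
      have hbd : ∀ z ∈ nesubpDel G (↑X : Set V), ∀ i, 0 ≤ z i ∧ z i ≤ 1 := by
        rw [nesubpDel_eq_hull G X]
        apply mem_hull_bounds
        rintro z ⟨S, F, _, _, _, _, rfl⟩
        exact gens_bounds rfl
      have hrec := fun x y hi he => rec_zero A B b C D c hproj hne hbd x y hi he
      have hEF := main_construction G X hX hdeg A B b C D c hproj hrec
      refine le_trans (Nat.sInf_le hEF) ?_
      simp only [Fintype.card_fin]
      have hms : X.card * (3 * G.edgeFinset.card + Fintype.card V + 1)
          = X.card * (3 * G.edgeFinset.card + Fintype.card V) + X.card := Nat.mul_succ _ _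
      rw [hms]
      omega
end
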